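/- arXiv:1710.04972 — 9 statements merged into one kernel-verified Lean document; each statement's English description precedes it below -/
import Mathlib

section
/- For n ≥ 5, the maximum over all nontrivial g in A_n of (|supp(g)| + c*(g))/2 equals ⌊3n/4⌋. -/
lemma aux_mem (n : ℕ) (m : Multiset ℕ) (h2 : ∀ a ∈ m, 2 ≤ a) (hne : m ≠ 0)
    (hsum : m.sum ≤ n) (heven : (m.sum + Multiset.card m) % 2 = 0)
    (hval : (m.sum + Multiset.card m) / 2 = 3 * n / 4) :
    3 * n / 4 ∈ {k : ℕ | ∃ g ∈ alternatingGroup (Fin n), g ≠ 1 ∧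
      k = (g.support.card + g.cycleType.card) / 2} := by
  obtain ⟨g, hg⟩ := (Equiv.Perm.exists_with_cycleType_iff (Fin n)).2
    ⟨by simpa using hsum, h2⟩
  refine ⟨g, ?_, ?_, ?_⟩
  · rw [Equiv.Perm.mem_alternatingGroup, Equiv.Perm.sign_of_cycleType, hg]
    exact Even.neg_one_pow (Nat.even_iff.2 heven)
  · intro h
    apply hne
    rw [← hg, h, Equiv.Perm.cycleType_one]
  · rw [← Equiv.Perm.sum_cycleType g, hg]
    exact hval.symm

/-- The maximum of `(|supp g| + c*(g))/2` over nontrivial `g ∈ A_n` is `⌊3n/4⌋`. -/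
theorem max_l_value (n : ℕ) (hn : 5 ≤ n) :
    IsGreatest {m : ℕ | ∃ g ∈ alternatingGroup (Fin n), g ≠ 1 ∧
      m = (g.support.card + g.cycleType.card) / 2} (3 * n / 4) := by
  constructor
  · have h4 : n % 4 = 0 ∨ n % 4 = 1 ∨ n % 4 = 2 ∨ n % 4 = 3 := by omega
    rcases h4 with h | h | h | h
    · refine aux_mem n (Multiset.replicate (n / 2) 2) ?_ ?_ ?_ ?_ ?_
      · intro a ha; rw [Multiset.eq_of_mem_replicate ha]
      · intro h
        have := congrArg Multiset.card h
        simp only [Multiset.card_replicate, Multiset.card_zero] at this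
        omega
      · simp [Multiset.sum_replicate]; omega
      · simp [Multiset.sum_replicate]; omega
      · simp [Multiset.sum_replicate]; omega
    · refine aux_mem n (Multiset.replicate ((n - 1) / 2) 2) ?_ ?_ ?_ ?_ ?_
      · intro a ha; rw [Multiset.eq_of_mem_replicate ha]
      · intro h
        have := congrArg Multiset.card h
        simp only [Multiset.card_replicate, Multiset.card_zero] at this
        omega
      · simp [Multiset.sum_replicate]; omega
      · simp [Multiset.sum_replicate]; omega
      · simp [Multiset.sum_replicate]; omega
    · refine aux_mem n (4 ::ₘ Multiset.replicate ((n - 4) / 2) 2) ?_ ?_ ?_ ?_ ?_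
      · intro a ha
        rcases Multiset.mem_cons.1 ha with rfl | ha
        · omega
        · rw [Multiset.eq_of_mem_replicate ha]
      · exact Multiset.cons_ne_zero
      · simp [Multiset.sum_replicate]; omega
      · simp [Multiset.sum_replicate]; omega
      · simp [Multiset.sum_replicate]; omega
    · refine aux_mem n (3 ::ₘ Multiset.replicate ((n - 3) / 2) 2) ?_ ?_ ?_ ?_ ?_
      · intro a ha
        rcases Multiset.mem_cons.1 ha with rfl | ha
        · omega
        · rw [Multiset.eq_of_mem_replicate ha]
      · exact Multiset.cons_ne_zero
      · simp [Multiset.sum_replicate]; omega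
      · simp [Multiset.sum_replicate]; omega
      · simp [Multiset.sum_replicate]; omega
  · rintro k ⟨g, -, hg1, rfl⟩
    have hs : g.support.card ≤ n := by
      simpa using g.support.card_le_univ
    have hc : 2 * Multiset.card g.cycleType ≤ g.support.card := by
      rw [← Equiv.Perm.sum_cycleType g]
      have := Multiset.card_nsmul_le_sum
        (fun x (hx : x ∈ g.cycleType) => Equiv.Perm.two_le_of_mem_cycleType hx)
      simpa [smul_eq_mul, mul_comm] using this
    omega
end

section
/- If a and b are single cycles in S_n whose supports intersect in m ≥ 1 points, then the product ab has at most m nontrivial cycles in its disjoint cycle decomposition. -/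
open Equiv Equiv.Perm Finset

/-- A nonempty forward-invariant subset of the support of a cycle is the whole support. -/
lemma cycle_support_subset_of_invariant {α : Type*} [Fintype α] [DecidableEq α]
    {g : Equiv.Perm α} (hg : g.IsCycle) {S : Finset α} (hS : S.Nonempty)
    (hsub : S ⊆ g.support) (hinv : ∀ x ∈ S, g x ∈ S) : g.support ⊆ S := by
  obtain ⟨x, hx⟩ := hS
  intro y hy
  have hgx : g x ≠ x := mem_support.mp (hsub hx)
  have hgy : g y ≠ y := mem_support.mp hy
  obtain ⟨i, hi⟩ := hg.exists_pow_eq hgx hgy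
  have key : ∀ j : ℕ, (g ^ j) x ∈ S := by
    intro j
    induction j with
    | zero => simpa using hx
    | succ k ih =>
      have : g ((g ^ k) x) ∈ S := hinv _ ih
      simpa [pow_succ', Equiv.Perm.mul_apply] using this
  simpa [hi] using key i

/-- Every nontrivial cycle of `a*b` contains a point `x` of `b.support` with
`b x ∈ a.support`, provided the supports of the cycles `a` and `b` intersect. -/
lemma exists_good_point {α : Type*} [Fintype α] [DecidableEq α]
    {a b : Equiv.Perm α} (ha : a.IsCycle) (hb : b.IsCycle)
    (hI : (a.support ∩ b.support).Nonempty)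
    {c : Equiv.Perm α} (hc : c ∈ (a * b).cycleFactorsFinset) :
    ∃ x ∈ c.support, x ∈ b.support ∧ b x ∈ a.support := by
  by_contra hcon
  push_neg at hcon
  -- so for all x in c.support, x ∈ b.support → b x ∉ a.support
  obtain ⟨hcyc, hcc⟩ := Equiv.Perm.mem_cycleFactorsFinset_iff.mp hc
  by_cases hB : ∃ x ∈ c.support, x ∈ b.support
  · -- c.support ∩ b.support is nonempty, b-invariant
    obtain ⟨x0, hx0c, hx0b⟩ := hB
    have hinv : ∀ x ∈ c.support ∩ b.support, b x ∈ c.support ∩ b.support := by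
      intro x hx
      rw [Finset.mem_inter] at hx ⊢
      have hbxA : b x ∉ a.support := hcon x hx.1 hx.2
      have habx : (a * b) x = b x := by
        have : a (b x) = b x := by simpa [Equiv.Perm.mem_support, not_not] using hbxA
        simpa [Equiv.Perm.mul_apply] using this
      have : c x = b x := (hcc x hx.1).trans habx
      constructor
      · rw [← this]; exact Equiv.Perm.apply_mem_support.mpr hx.1
      · exact Equiv.Perm.apply_mem_support.mpr hx.2
    have hsubB : b.support ⊆ c.support ∩ b.support :=
      cycle_support_subset_of_invariant hb ⟨x0, Finset.mem_inter.mpr ⟨hx0c, hx0b⟩⟩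
        Finset.inter_subset_right hinv
    -- now every point of b.support is in c.support, so b x ∉ a.support for all x ∈ b.support
    obtain ⟨z, hz⟩ := hI
    rw [Finset.mem_inter] at hz
    have hz' : b⁻¹ z ∈ b.support := by
      have h0 : b⁻¹ z ∈ b⁻¹.support :=
        Equiv.Perm.apply_mem_support.mpr (by rw [Equiv.Perm.support_inv]; exact hz.2)
      rwa [Equiv.Perm.support_inv] at h0
    have hzc : b⁻¹ z ∈ c.support := (Finset.mem_inter.mp (hsubB hz')).1
    have : b (b⁻¹ z) ∉ a.support := hcon _ hzc hz'
    rw [show b (b⁻¹ z) = z from b.apply_symm_apply z] at this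
    exact this hz.1
  · -- c.support misses b.support entirely, so a*b acts as a on c.support
    push_neg at hB
    have hinv : ∀ x ∈ c.support, a x ∈ c.support := by
      intro x hx
      have hbx : b x = x := by
        have := hB x hx
        simpa [Equiv.Perm.mem_support, not_not] using this
      have : c x = a x := by
        have := hcc x hx
        rw [Equiv.Perm.mul_apply, hbx] at this
        exact this
      rw [← this]; exact Equiv.Perm.apply_mem_support.mpr hx
    have hsubA : c.support ⊆ a.support := by
      intro x hx
      have hcx : c x ≠ x := mem_support.mp hx
      have hbx : b x = x := by
        have := hB x hx
        simpa [Equiv.Perm.mem_support, not_not] using this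
      have : a x ≠ x := by
        have := hcc x hx
        rw [Equiv.Perm.mul_apply, hbx] at this
        rw [← this]; exact hcx
      exact mem_support.mpr this
    have hsub : a.support ⊆ c.support :=
      cycle_support_subset_of_invariant ha hcyc.nonempty_support hsubA hinv
    obtain ⟨z, hz⟩ := hI
    rw [Finset.mem_inter] at hz
    exact hB z (hsub hz.1) hz.2

/-- Bertram's lemma: if cycles `a`, `b` have supports meeting in `m ≥ 1` points,
then `ab` has at most `m` nontrivial cycles. -/
theorem cycles_intersecting (n : ℕ) (a b : Equiv.Perm (Fin n))
    (ha : a.IsCycle) (hb : b.IsCycle) (m : ℕ)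
    (hm : m = (a.support ∩ b.support).card) (hm1 : 1 ≤ m) :
    (a * b).cycleType.card ≤ m := by
  classical
  have hI : (a.support ∩ b.support).Nonempty := by
    rw [← Finset.card_pos, ← hm]; omega
  have hcard : (a * b).cycleType.card = (a * b).cycleFactorsFinset.card := by
    simp [Equiv.Perm.cycleType_def]
  rw [hcard, hm]
  -- choose for each cycle a good point
  have H : ∀ c ∈ (a * b).cycleFactorsFinset, ∃ x, x ∈ c.support ∧ x ∈ b.support ∧ b x ∈ a.support := by
    intro c hc
    obtain ⟨x, h1, h2, h3⟩ := exists_good_point ha hb hI hc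
    exact ⟨x, h1, h2, h3⟩
  have hne : Nonempty (Fin n) := ⟨hI.choose⟩
  choose! f hf using H
  have hf1 : ∀ c ∈ (a * b).cycleFactorsFinset, f c ∈ c.support := fun c hc => (hf c hc).1
  have hf2 : ∀ c ∈ (a * b).cycleFactorsFinset, f c ∈ b.support := fun c hc => (hf c hc).2.1
  have hf3 : ∀ c ∈ (a * b).cycleFactorsFinset, b (f c) ∈ a.support := fun c hc => (hf c hc).2.2
  apply Finset.card_le_card_of_injOn (fun c => b (f c))
  · intro c hc
    rw [Finset.mem_coe, Finset.mem_inter]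
    exact ⟨hf3 c hc, Equiv.Perm.apply_mem_support.mpr (hf2 c hc)⟩
  · intro c1 hc1 c2 hc2 heq
    simp only at heq
    have hx : f c1 = f c2 := b.injective heq
    have h1 : c1 = (a * b).cycleOf (f c1) := Equiv.Perm.cycle_is_cycleOf (hf1 c1 hc1) hc1
    have h2 : c2 = (a * b).cycleOf (f c2) := Equiv.Perm.cycle_is_cycleOf (hf1 c2 hc2) hc2
    rw [h1, h2, hx]
end

section
/- Fix an odd prime p. Every odd-length cycle a in A_n with |supp(a)| ≥ p can be written as a product of at most 3 permutations each of order dividing p. -/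
open Equiv List

namespace OddCycleP

variable {α : Type*} [DecidableEq α]

/-- Disjointness of `formPerm`s from list disjointness. -/
theorem disj_formPerm {l₁ l₂ : List α} (h : l₁.Disjoint l₂) :
    Equiv.Perm.Disjoint l₁.formPerm l₂.formPerm := by
  intro z
  by_cases hz : z ∈ l₁
  · exact Or.inr (List.formPerm_apply_of_notMem fun hz2 => h hz hz2)
  · exact Or.inl (List.formPerm_apply_of_notMem hz)

theorem swap_commute_formPerm {a b : α} {l : List α} (ha : a ∉ l) (hb : b ∉ l) :
    Commute (Equiv.swap a b) l.formPerm := by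
  refine Equiv.Perm.Disjoint.commute (fun z => ?_)
  by_cases hz : z ∈ l
  · refine Or.inl (Equiv.swap_apply_of_ne_of_ne ?_ ?_) <;> rintro rfl <;> contradiction
  · exact Or.inr (List.formPerm_apply_of_notMem hz)

/-- Relabeling the head of a cycle by conjugating with a swap. -/
theorem formPerm_cons_mul_swap {a b : α} (hab : a ≠ b) :
    ∀ (l : List α), a ∉ l → b ∉ l →
      (b :: l).formPerm * Equiv.swap a b = Equiv.swap a b * (a :: l).formPerm := by
  intro l
  induction l with
  | nil => intro _ _; simp [List.formPerm_singleton]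
  | cons c l ih =>
    intro ha hb
    have hac : a ≠ c := by rintro rfl; exact ha (List.mem_cons_self)
    have hbc : b ≠ c := by rintro rfl; exact hb (List.mem_cons_self)
    have ha' : a ∉ l := fun h => ha (List.mem_cons_of_mem _ h)
    have hb' : b ∉ l := fun h => hb (List.mem_cons_of_mem _ h)
    rw [List.formPerm_cons_cons, List.formPerm_cons_cons]
    have hcomm : Commute (Equiv.swap a b) (c :: l).formPerm := by
      refine swap_commute_formPerm ha hb
    calc Equiv.swap b c * (c :: l).formPerm * Equiv.swap a b
        = Equiv.swap b c * (Equiv.swap a b * (c :: l).formPerm) := by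
          rw [mul_assoc, hcomm.eq]
      _ = (Equiv.swap b c * Equiv.swap a b) * (c :: l).formPerm := by rw [mul_assoc]
      _ = (Equiv.swap a b * Equiv.swap a c) * (c :: l).formPerm := by
          rw [show Equiv.swap b c * Equiv.swap a b = Equiv.swap a b * Equiv.swap a c from ?_]
          have := Equiv.swap_apply_apply (Equiv.swap a b) a c
          rw [Equiv.swap_apply_left, Equiv.swap_apply_of_ne_of_ne hac.symm hbc.symm] at this
          rw [Equiv.swap_inv] at this
          calc Equiv.swap b c * Equiv.swap a b
              = (Equiv.swap a b * Equiv.swap a c * Equiv.swap a b) * Equiv.swap a b := by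
                rw [← this]
            _ = Equiv.swap a b * Equiv.swap a c := by
                rw [mul_assoc, Equiv.swap_mul_self, mul_one]
      _ = Equiv.swap a b * (a :: c :: l).formPerm := by
          rw [mul_assoc, ← List.formPerm_cons_cons]

theorem glue : ∀ (B A : List α) (b : α), (b :: (A ++ B)).Nodup →
    (b :: A).formPerm * (b :: B).formPerm = (b :: (B ++ A)).formPerm := by
  intro B
  induction B with
  | nil => intro A b _; simp [List.formPerm_singleton]
  | cons c B ih =>
    intro A b hnd
    -- facts
    have hbA : b ∉ A := by
      simp only [List.nodup_cons, List.mem_append] at hnd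
      exact fun h => hnd.1 (Or.inl h)
    have hcA : c ∉ A := by
      simp only [List.nodup_cons, List.nodup_append, List.Disjoint] at hnd
      exact fun h => hnd.2.2.2 c h c List.mem_cons_self rfl
    have hbc : b ≠ c := by
      simp only [List.nodup_cons, List.mem_append] at hnd
      exact fun h => hnd.1 (Or.inr (h ▸ List.mem_cons_self))
    rw [List.formPerm_cons_cons b c]
    calc (b :: A).formPerm * (Equiv.swap b c * (c :: B).formPerm)
        = ((b :: A).formPerm * Equiv.swap b c) * (c :: B).formPerm := by rw [mul_assoc]
      _ = (Equiv.swap c b * (c :: A).formPerm) * (c :: B).formPerm := by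
          rw [show (b :: A).formPerm * Equiv.swap b c = Equiv.swap c b * (c :: A).formPerm from ?_]
          have := formPerm_cons_mul_swap (a := c) (b := b) hbc.symm A hcA hbA
          rw [Equiv.swap_comm b c]
          exact this
      _ = Equiv.swap c b * ((c :: A).formPerm * (c :: B).formPerm) := by rw [mul_assoc]
      _ = Equiv.swap c b * (c :: (B ++ A)).formPerm := by
          rw [ih A c ?_]
          have h1 : (A ++ c :: B).Nodup := (List.nodup_cons.mp hnd).2
          exact (List.perm_middle.nodup_iff).mp h1
      _ = (b :: (c :: B ++ A)).formPerm := by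
          rw [List.cons_append, List.formPerm_cons_cons b c, Equiv.swap_comm c b]

/-- Interleaving of two lists. -/
def ilv : List α → List α → List α
  | [], r => r
  | a :: l, r => a :: ilv r l
termination_by l r => l.length + r.length
decreasing_by simp [List.length_cons]; omega

@[simp] theorem ilv_nil_left (r : List α) : ilv [] r = r := by simp [ilv]

@[simp] theorem ilv_cons (a : α) (l r : List α) : ilv (a :: l) r = a :: ilv r l := by simp [ilv]

theorem ilv_perm (U V : List α) : ilv U V ~ U ++ V := by
  induction U, V using ilv.induct with
  | case1 r => simp
  | case2 a l r ih =>
    rw [ilv_cons]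
    calc a :: ilv r l ~ a :: (r ++ l) := (ih).cons a
      _ ~ a :: (l ++ r) := (List.perm_append_comm).cons a
      _ = (a :: l) ++ r := rfl

theorem mem_ilv {x : α} {U V : List α} : x ∈ ilv U V ↔ x ∈ U ∨ x ∈ V := by
  rw [(ilv_perm U V).mem_iff, List.mem_append]

theorem length_ilv (U V : List α) : (ilv U V).length = U.length + V.length := by
  rw [(ilv_perm U V).length_eq, List.length_append]


theorem nodup_congr {l₁ l₂ : List α} (h : (↑l₁ : Multiset α) = ↑l₂) (h₂ : l₂.Nodup) : l₁.Nodup :=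
  (Multiset.coe_eq_coe.mp h).symm.nodup h₂

theorem ilv_coe (U V : List α) : (↑(ilv U V) : Multiset α) = ↑U + ↑V := by
  rw [show (↑U + ↑V : Multiset α) = ↑(U ++ V) from rfl]
  exact Multiset.coe_eq_coe.mpr (ilv_perm U V)

set_option maxHeartbeats 1000000 in
/-- The key "two cycles with interleaved shared part" product formula. -/
theorem s2 : ∀ (V U : List α) (a b : α) (A B : List α),
    U.length = V.length + 1 →
    (a :: b :: (ilv U V ++ (A ++ B))).Nodup →
    (a :: (ilv U V ++ A)).formPerm * (b :: (ilv U V ++ B)).formPerm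
      = (a :: (U ++ (B ++ (b :: (V ++ A))))).formPerm := by
  intro V
  induction V with
  | nil =>
    intro U a b A B hlen hnd
    obtain ⟨u, hU⟩ : ∃ u, U = [u] := by
      match U, hlen with
      | [u], _ => exact ⟨u, rfl⟩
    subst hU
    simp only [ilv_cons, ilv_nil_left] at hnd ⊢
    -- hnd : (a :: b :: ([u] ++ (A ++ B))).Nodup
    simp only [List.singleton_append, List.nodup_cons, List.mem_cons, List.mem_append,
      List.nodup_append] at hnd
    obtain ⟨ha, ⟨hb, ⟨hu, hA, hB, hAB⟩⟩⟩ := hnd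
    push_neg at ha hb hu
    have hbu : b ≠ u := hb.1
    have hbA : b ∉ A := hb.2.1
    have huA : u ∉ A := hu.1
    have huB : u ∉ B := hu.2
    have hbB : b ∉ B := hb.2.2
    simp only [List.singleton_append, List.nil_append]
    -- LHS
    rw [List.formPerm_cons_cons a u, List.formPerm_cons_cons b u]
    -- RHS : a :: u :: (B ++ b :: A)
    rw [show (a :: (u :: (B ++ (b :: A)))).formPerm
        = Equiv.swap a u * (u :: (B ++ (b :: A))).formPerm from List.formPerm_cons_cons a u _]
    rw [show (u :: (B ++ (b :: A))).formPerm
        = (u :: (b :: A)).formPerm * (u :: B).formPerm from ?_]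
    · rw [List.formPerm_cons_cons u b]
      have hswap : (u :: A).formPerm * Equiv.swap b u = Equiv.swap b u * (b :: A).formPerm :=
        formPerm_cons_mul_swap hbu A hbA huA
      calc Equiv.swap a u * (u :: A).formPerm * (Equiv.swap b u * (u :: B).formPerm)
          = Equiv.swap a u * ((u :: A).formPerm * Equiv.swap b u) * (u :: B).formPerm := by
            group
        _ = Equiv.swap a u * (Equiv.swap b u * (b :: A).formPerm) * (u :: B).formPerm := by
            rw [hswap]
        _ = Equiv.swap a u * (Equiv.swap u b * ((b :: A).formPerm * (u :: B).formPerm)) := by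
            rw [Equiv.swap_comm b u]; group
    · rw [glue]
      refine List.nodup_cons.mpr ⟨?_, ?_⟩
      · simp only [List.mem_append, List.mem_cons]
        rintro (⟨h | h⟩ | h)
        · exact hbu h.symm
        · exact huA h
        · exact huB h
      · refine List.Nodup.append ?_ hB ?_
        · exact List.nodup_cons.mpr ⟨hbA, hA⟩
        · intro z hz hz'
          rcases List.mem_cons.mp hz with rfl | hz
          · exact hbB hz'
          · exact hAB z hz z hz' rfl
  | cons v V'' ih =>
    intro U a b A B hlen hnd
    obtain ⟨u, U'', hU⟩ : ∃ u U'', U = u :: U'' := by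
      match U, hlen with
      | u :: U'', _ => exact ⟨u, U'', rfl⟩
    subst hU
    have hlen'' : U''.length = V''.length + 1 := by
      simpa using hlen
    simp only [ilv_cons] at hnd ⊢
    -- now ilv (v::V'') U'' = v :: ilv U'' V''
    set I := ilv U'' V'' with hI
    simp only [List.cons_append] at hnd ⊢
    -- hnd : (a :: b :: u :: v :: (I ++ (A ++ B))).Nodup
    have hbase : (u :: v :: (I ++ (A ++ B))).Nodup := (List.nodup_cons.mp (List.nodup_cons.mp hnd).2).2
    have hbase2 : (b :: u :: v :: (I ++ (A ++ B))).Nodup := (List.nodup_cons.mp hnd).2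
    have hnc := hnd
    simp only [List.nodup_cons, List.mem_cons, List.mem_append, mem_ilv, not_or] at hnc
    obtain ⟨⟨hab, hau, hav, haI, haA, haB⟩, ⟨hbu, hbv, hbI, hbA, hbB⟩,
      ⟨huv, huI, huA, huB⟩, ⟨hvI, hvA, hvB⟩, hrest⟩ := hnc
    have huIA : u ∉ I ++ A := by simp only [List.mem_append]; tauto
    have hvIA : v ∉ I ++ A := by simp only [List.mem_append]; tauto
    have hbIA : b ∉ I ++ A := by simp only [List.mem_append]; tauto
    have huvIA : u ∉ v :: (I ++ A) := by simp only [List.mem_cons, List.mem_append]; tauto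
    have hbvIA : b ∉ v :: (I ++ A) := by simp only [List.mem_cons, List.mem_append]; tauto
    -- names
    set X := (v :: (I ++ A)).formPerm with hX
    set Y := (v :: (I ++ B)).formPerm with hY
    have e1 : (a :: u :: v :: (I ++ A)).formPerm = Equiv.swap a u * (Equiv.swap u v * X) := by
      rw [List.formPerm_cons_cons, List.formPerm_cons_cons]
    have e2 : (b :: u :: v :: (I ++ B)).formPerm = Equiv.swap b u * (Equiv.swap u v * Y) := by
      rw [List.formPerm_cons_cons, List.formPerm_cons_cons]
    rw [e1, e2]
    have comm1 : X * Equiv.swap b u = Equiv.swap b u * X := by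
      exact (swap_commute_formPerm hbvIA huvIA).symm.eq
    have conj1 : X * Equiv.swap u v = Equiv.swap u v * (u :: (I ++ A)).formPerm :=
      formPerm_cons_mul_swap huv _ huIA hvIA
    have ihnd : (u :: v :: (ilv U'' V'' ++ (A ++ B))).Nodup := hbase
    have ih' := ih U'' u v A B hlen'' ?_
    swap
    · simpa [ilv_cons] using ihnd
    rw [show ilv U'' V'' = I from rfl] at ih'
    -- swap algebra : swap u v * swap b u * swap u v = swap b v
    have swalg : Equiv.swap u v * Equiv.swap b u * Equiv.swap u v = Equiv.swap b v := by
      have h0 := Equiv.swap_apply_apply (Equiv.swap u v) b u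
      rw [Equiv.swap_apply_of_ne_of_ne hbu hbv, Equiv.swap_apply_left, Equiv.swap_inv] at h0
      exact h0.symm
    -- M manipulations
    set M := u :: (U'' ++ (B ++ (v :: (V'' ++ A)))) with hM
    have hMnd : M.Nodup := by
      refine nodup_congr ?_ hbase
      simp only [hM, ← Multiset.cons_coe, ilv_coe]
      rw [show (↑(U'' ++ (B ++ (v :: (V'' ++ A)))) : Multiset α)
          = ↑U'' + (↑B + (v ::ₘ (↑V'' + ↑A))) from rfl]
      rw [show (↑(I ++ (A ++ B)) : Multiset α) = ↑I + (↑A + ↑B) from rfl, hI, ilv_coe]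
      simp only [← Multiset.singleton_add]
      abel
    have hMrot : M.formPerm = ((v :: (V'' ++ A)) ++ (u :: (U'' ++ B))).formPerm := by
      refine List.formPerm_eq_of_isRotated hMnd ?_
      rw [show M = (u :: (U'' ++ B)) ++ (v :: (V'' ++ A)) by
        simp [hM, List.cons_append, List.append_assoc]]
      exact List.isRotated_append
    set M3 := b :: v :: ((V'' ++ A) ++ (u :: (U'' ++ B))) with hM3
    have hM3nd : M3.Nodup := by
      refine nodup_congr ?_ hbase2
      simp only [hM3, ← Multiset.cons_coe]
      rw [show (↑((V'' ++ A) ++ (u :: (U'' ++ B))) : Multiset α)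
          = (↑V'' + ↑A) + (u ::ₘ (↑U'' + ↑B)) from rfl]
      rw [show (↑(I ++ (A ++ B)) : Multiset α) = ↑I + (↑A + ↑B) from rfl, hI, ilv_coe]
      simp only [← Multiset.singleton_add]
      abel
    have hM3rot : M3.formPerm = (u :: ((U'' ++ B) ++ (b :: v :: (V'' ++ A)))).formPerm := by
      refine List.formPerm_eq_of_isRotated hM3nd ?_
      rw [show M3 = (b :: v :: (V'' ++ A)) ++ (u :: (U'' ++ B)) by
        simp [hM3, List.cons_append, List.append_assoc]]
      rw [show (u :: ((U'' ++ B) ++ (b :: v :: (V'' ++ A))) : List α)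
          = (u :: (U'' ++ B)) ++ (b :: v :: (V'' ++ A)) by
        simp [List.cons_append, List.append_assoc]]
      exact List.isRotated_append
    calc Equiv.swap a u * (Equiv.swap u v * X) * (Equiv.swap b u * (Equiv.swap u v * Y))
        = Equiv.swap a u * ((Equiv.swap u v * ((X * Equiv.swap b u) * Equiv.swap u v)) * Y) := by
          group
      _ = Equiv.swap a u * ((Equiv.swap u v * ((Equiv.swap b u * X) * Equiv.swap u v)) * Y) := by
          rw [comm1]
      _ = Equiv.swap a u * ((Equiv.swap u v * (Equiv.swap b u * (X * Equiv.swap u v))) * Y) := by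
          rw [mul_assoc (Equiv.swap b u) X (Equiv.swap u v)]
      _ = Equiv.swap a u * ((Equiv.swap u v * (Equiv.swap b u
            * (Equiv.swap u v * (u :: (I ++ A)).formPerm))) * Y) := by rw [conj1]
      _ = Equiv.swap a u * ((Equiv.swap u v * Equiv.swap b u * Equiv.swap u v)
            * ((u :: (I ++ A)).formPerm * Y)) := by group
      _ = Equiv.swap a u * (Equiv.swap b v * M.formPerm) := by rw [swalg, hY, ih']
      _ = Equiv.swap a u * (Equiv.swap b v
            * (v :: ((V'' ++ A) ++ (u :: (U'' ++ B)))).formPerm) := by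
          rw [hMrot, List.cons_append]
      _ = Equiv.swap a u * M3.formPerm := by rw [hM3, List.formPerm_cons_cons b v]
      _ = Equiv.swap a u * (u :: ((U'' ++ B) ++ (b :: v :: (V'' ++ A)))).formPerm := by
          rw [hM3rot]
      _ = (a :: u :: ((U'' ++ B) ++ (b :: v :: (V'' ++ A)))).formPerm := by
          rw [List.formPerm_cons_cons a u]
      _ = (a :: u :: (U'' ++ (B ++ b :: v :: (V'' ++ A)))).formPerm := by
          rw [List.append_assoc]


/-- Product of two cycles sharing an interleaved odd-length subsequence. -/
theorem gg (U V A B : List α) (hlen : U.length = V.length + 1)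
    (hnd : (ilv U V ++ (A ++ B)).Nodup) :
    (ilv U V ++ A).formPerm * (ilv U V ++ B).formPerm
      = (U ++ (B ++ (V ++ A))).formPerm := by
  match V, U, hlen with
  | [], [u], _ =>
    simp only [ilv_cons, ilv_nil_left, List.singleton_append, List.nil_append,
      List.cons_append] at hnd ⊢
    exact glue B A u hnd
  | v :: V'', u :: U'', hlen =>
    have hlen'' : U''.length = V''.length + 1 := by simpa using hlen
    simp only [ilv_cons, List.cons_append] at hnd ⊢
    set I := ilv U'' V'' with hI
    -- hnd : (u :: v :: (I ++ (A ++ B))).Nodup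
    have hnc := hnd
    simp only [List.nodup_cons, List.mem_cons, List.mem_append, not_or] at hnc
    obtain ⟨⟨huv, huI, huA, huB⟩, ⟨hvI, hvA, hvB⟩, hrest⟩ := hnc
    have huIA : u ∉ I ++ A := by simp only [List.mem_append]; tauto
    have hvIA : v ∉ I ++ A := by simp only [List.mem_append]; tauto
    have conj1 : (v :: (I ++ A)).formPerm * Equiv.swap u v
        = Equiv.swap u v * (u :: (I ++ A)).formPerm :=
      formPerm_cons_mul_swap huv _ huIA hvIA
    have hs2 := s2 V'' U'' u v A B hlen'' ?_
    swap
    · simpa [ilv_cons] using hnd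
    rw [show ilv U'' V'' = I from rfl] at hs2
    calc (u :: v :: (I ++ A)).formPerm * (u :: v :: (I ++ B)).formPerm
        = Equiv.swap u v * ((v :: (I ++ A)).formPerm * Equiv.swap u v)
            * (v :: (I ++ B)).formPerm := by
          rw [List.formPerm_cons_cons u v, List.formPerm_cons_cons u v]; group
      _ = Equiv.swap u v * (Equiv.swap u v * (u :: (I ++ A)).formPerm)
            * (v :: (I ++ B)).formPerm := by rw [conj1]
      _ = (u :: (I ++ A)).formPerm * (v :: (I ++ B)).formPerm := by
          rw [show Equiv.swap u v * (Equiv.swap u v * (u :: (I ++ A)).formPerm)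
              * (v :: (I ++ B)).formPerm
              = (Equiv.swap u v * Equiv.swap u v) * ((u :: (I ++ A)).formPerm
              * (v :: (I ++ B)).formPerm) by group, Equiv.swap_mul_self, one_mul]
      _ = (u :: (U'' ++ (B ++ v :: (V'' ++ A)))).formPerm := hs2
      _ = (u :: (U'' ++ (B ++ (v :: V'' ++ A)))).formPerm := by
          rw [List.cons_append]

theorem inv_fix (f : Equiv.Perm α) (z : α) (h : f z = z) : f⁻¹ z = z := by
  conv_lhs => rw [← h]
  exact Equiv.symm_apply_apply f z

def jfn (p m : ℕ) : ℕ := if 2 * p ≤ m then 1 else if m = p then 0 else p - (m - 1) / 2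

set_option maxHeartbeats 1000000 in
theorem main_ind (p : ℕ) (hp3 : 3 ≤ p) (hpodd : Odd p) :
    ∀ m : ℕ, Odd m → p ≤ m → ∀ l : List α, l.Nodup → l.length = m →
    ∃ x y : Equiv.Perm α, x ^ p = 1 ∧ y ^ p = 1 ∧ l.formPerm = x * y ∧
      (∀ z, z ∉ l → x z = z) ∧ (∀ z, z ∉ l → y z = z) ∧
      (∀ i : ℕ, ∀ hi : i < l.length, (i = jfn p m ∨ i = jfn p m + 1) →
        x (l.get ⟨i, hi⟩) = l.get ⟨i, hi⟩) := by
  intro m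
  induction m using Nat.strong_induction_on with
  | _ m IH =>
  intro hmodd hpm l hnd hlen
  have hp2 : p % 2 = 1 := Nat.odd_iff.mp hpodd
  have hm2 : m % 2 = 1 := Nat.odd_iff.mp hmodd
  rcases eq_or_lt_of_le hpm with heq | hlt
  · -- m = p : take x = 1, y = formPerm l
    refine ⟨1, l.formPerm, one_pow p, ?_, (one_mul _).symm, by simp, ?_, by simp⟩
    · have := List.formPerm_pow_length_eq_one_of_nodup l hnd
      rwa [hlen, ← heq] at this
    · intro z hz
      exact List.formPerm_apply_of_notMem hz
  rcases le_or_gt m (2 * p - 1) with hsmall | hbig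
  · -- base case : p + 2 ≤ m ≤ 2p - 1
    have hm : p + 2 ≤ m := by omega
    set o := (2 * p - m - 1) / 2 with ho
    set e := o + 1 with he
    set c := m - p with hc
    have hoc : 2 * o + 1 = 2 * p - m := by omega
    set U := l.take e with hU
    set SB := (l.drop e).take c with hSB
    set V := ((l.drop e).drop c).take o with hV
    set SA := ((l.drop e).drop c).drop o with hSA
    have hsplit : l = U ++ (SB ++ (V ++ SA)) := by
      rw [hU, hSB, hV, hSA, List.take_append_drop, List.take_append_drop,
        List.take_append_drop]
    have hlU : U.length = e := by simp [hU]; omega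
    have hlSB : SB.length = c := by simp [hSB]; omega
    have hlV : V.length = o := by simp [hV]; omega
    have hlSA : SA.length = c := by simp [hSA]; omega
    have hlenUV : U.length = V.length + 1 := by omega
    -- nodup facts
    have hndA : (ilv U V ++ (SA ++ SB)).Nodup := by
      refine nodup_congr ?_ (hsplit ▸ hnd)
      rw [show (↑(ilv U V ++ (SA ++ SB)) : Multiset α) = ↑(ilv U V) + (↑SA + ↑SB) from rfl,
        show (↑(U ++ (SB ++ (V ++ SA))) : Multiset α) = ↑U + (↑SB + (↑V + ↑SA)) from rfl,
        ilv_coe]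
      abel
    have hndB : (ilv U V ++ (SB ++ SA)).Nodup := by
      refine nodup_congr ?_ (hsplit ▸ hnd)
      rw [show (↑(ilv U V ++ (SB ++ SA)) : Multiset α) = ↑(ilv U V) + (↑SB + ↑SA) from rfl,
        show (↑(U ++ (SB ++ (V ++ SA))) : Multiset α) = ↑U + (↑SB + (↑V + ↑SA)) from rfl,
        ilv_coe]
      abel
    have hndxl : (ilv U V ++ SA).Nodup := by
      have : ((ilv U V ++ SA) ++ SB).Nodup := by
        rwa [List.append_assoc]
      exact this.of_append_left
    have hndyl : (ilv U V ++ SB).Nodup := by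
      have : ((ilv U V ++ SB) ++ SA).Nodup := by
        rwa [List.append_assoc]
      exact this.of_append_left
    have hdisjSB : (ilv U V ++ SA).Disjoint SB := by
      refine List.disjoint_of_nodup_append ?_
      rwa [List.append_assoc]
    have hlxl : (ilv U V ++ SA).length = p := by
      simp only [List.length_append, length_ilv]; omega
    have hlyl : (ilv U V ++ SB).length = p := by
      simp only [List.length_append, length_ilv]; omega
    refine ⟨(ilv U V ++ SA).formPerm, (ilv U V ++ SB).formPerm, ?_, ?_, ?_, ?_, ?_, ?_⟩
    · rw [← hlxl]; exact List.formPerm_pow_length_eq_one_of_nodup _ hndxl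
    · rw [← hlyl]; exact List.formPerm_pow_length_eq_one_of_nodup _ hndyl
    · rw [gg U V SA SB hlenUV hndA]
      rw [show U ++ (SB ++ (V ++ SA)) = l from hsplit.symm]
    · intro z hz
      refine List.formPerm_apply_of_notMem fun hmem => hz ?_
      rw [hsplit]
      rcases List.mem_append.mp hmem with h | h
      · rcases mem_ilv.mp h with h | h
        · simp [List.mem_append, h]
        · simp [List.mem_append, h]
      · simp [List.mem_append, h]
    · intro z hz
      refine List.formPerm_apply_of_notMem fun hmem => hz ?_
      rw [hsplit]
      rcases List.mem_append.mp hmem with h | h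
      · rcases mem_ilv.mp h with h | h
        · simp [List.mem_append, h]
        · simp [List.mem_append, h]
      · simp [List.mem_append, h]
    · intro i hi hcond
      have hj : jfn p m = e := by
        rw [jfn, if_neg (by omega), if_neg (by omega)]; omega
      have hie : e ≤ i ∧ i < e + c := by
        rcases hcond with h | h <;> omega
      refine List.formPerm_apply_of_notMem fun hmem => ?_
      have hgmem : l.get ⟨i, hi⟩ ∈ SB := by
        have h1 := List.getElem_of_eq hsplit hi
        rw [List.getElem_append_right (show U.length ≤ i by omega)] at h1
        rw [List.getElem_append_left (show i - U.length < SB.length by omega)] at h1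
        rw [show l.get ⟨i, hi⟩ = l[i]'hi from rfl, h1]
        exact List.getElem_mem _
      exact hdisjSB hmem hgmem
  · -- step case : m ≥ 2p + 1
    have hm : 2 * p + 1 ≤ m := by omega
    obtain ⟨w, lt, rfl⟩ : ∃ w lt, l = w :: lt := by
      cases l with
      | nil => simp at hlen; omega
      | cons w lt => exact ⟨w, lt, rfl⟩
    set Q := lt.take (p - 1) with hQ
    set R := lt.drop (p - 1) with hR
    have hQR : lt = Q ++ R := (List.take_append_drop _ _).symm
    have hllt : lt.length = m - 1 := by simp at hlen; omega
    have hlQ : Q.length = p - 1 := by simp [hQ]; omega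
    have hlR : R.length = m - p := by simp [hR]; omega
    have hndl : (w :: (Q ++ R)).Nodup := by rwa [← hQR]
    have hndl' : (w :: (R ++ Q)).Nodup := by
      refine nodup_congr ?_ hndl
      rw [show (↑(w :: (R ++ Q)) : Multiset α) = {w} + (↑R + ↑Q) by
          rw [← Multiset.cons_coe, ← Multiset.singleton_add]; rfl,
        show (↑(w :: (Q ++ R)) : Multiset α) = {w} + (↑Q + ↑R) by
          rw [← Multiset.cons_coe, ← Multiset.singleton_add]; rfl]
      abel
    have hglue : (w :: R).formPerm * (w :: Q).formPerm = (w :: lt).formPerm := by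
      rw [show (w :: lt) = w :: (Q ++ R) by rw [← hQR]]
      exact glue Q R w hndl' 
    set m₂ := m - p + 1 with hm₂
    set j₀ := jfn p m₂ with hj₀
    have hj₀lt : j₀ + 1 < m₂ := by
      rw [hj₀, jfn]
      split_ifs <;> omega
    set lam := (R.reverse ++ [w]).rotate (m₂ - 1 - j₀) with hlam
    have hndwR : (w :: R).Nodup := by
      have h1 : w ∉ R := fun h => (List.nodup_cons.mp hndl).1 (List.mem_append_right _ h)
      exact List.nodup_cons.mpr ⟨h1, (List.nodup_cons.mp hndl).2.of_append_right⟩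
    have hndRw : (R.reverse ++ [w]).Nodup := by
      refine nodup_congr ?_ hndwR
      rw [show (↑(R.reverse ++ [w]) : Multiset α) = ↑R.reverse + ↑[w] from rfl,
        Multiset.coe_reverse, show (↑(w :: R) : Multiset α) = {w} + ↑R by
          rw [← Multiset.cons_coe, ← Multiset.singleton_add]]
      abel
    have hndlam : lam.Nodup := List.nodup_rotate.mpr hndRw
    have hllam : lam.length = m₂ := by
      simp only [hlam, List.length_rotate, List.length_append, List.length_reverse,
        List.length_singleton]
      omega
    have hm₂odd : Odd m₂ := by rw [Nat.odd_iff]; omega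
    have hm₂p : p ≤ m₂ := by omega
    have hm₂lt : m₂ < m := by omega
    obtain ⟨X, Y, hXp, hYp, hfXY, hXout, hYout, hXfix⟩ :=
      IH m₂ hm₂lt hm₂odd hm₂p lam hndlam hllam
    -- lam[j₀] = w
    have hlamj : lam.get ⟨j₀, by omega⟩ = w := by
      have h1 : (lam.get ⟨j₀, by omega⟩ : α) = lam[j₀]'(by omega) := rfl
      have hlisteq : lam = (R.reverse.drop (m₂ - 1 - j₀) ++ [w])
          ++ R.reverse.take (m₂ - 1 - j₀) := by
        rw [hlam, List.rotate_eq_drop_append_take (by simp [hlR]; omega),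
          List.drop_append, List.take_append]
        have hd0 : m₂ - 1 - j₀ - R.reverse.length = 0 := by
          simp only [List.length_reverse, hlR]; omega
        have hdrop : [w].drop (m₂ - 1 - j₀ - R.reverse.length) = [w] := by rw [hd0]; exact List.drop_zero
        have htake : [w].take (m₂ - 1 - j₀ - R.reverse.length) = ([] : List α) := by rw [hd0]; rfl
        rw [hdrop, htake, List.append_nil]
      rw [h1, List.getElem_of_eq hlisteq]
      rw [List.getElem_append_left (by simp [hlR]; omega)]
      rw [List.getElem_append_right (by simp [hlR]; omega)]
      exact List.eq_of_mem_singleton (List.getElem_mem _)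
    have hXw : X w = w := by
      have := hXfix j₀ (by omega) (Or.inl rfl)
      rwa [hlamj] at this
    -- lam.formPerm = (w :: R).formPerm⁻¹
    have hlamfp : lam.formPerm = (w :: R).formPerm⁻¹ := by
      rw [hlam, List.formPerm_rotate _ hndRw, show R.reverse ++ [w] = (w :: R).reverse by
        simp, List.formPerm_reverse]
    have hwR : (w :: R).formPerm = Y⁻¹ * X⁻¹ := by
      have h1 : (w :: R).formPerm⁻¹ = X * Y := by rw [← hlamfp, hfXY]
      calc (w :: R).formPerm = ((w :: R).formPerm⁻¹)⁻¹ := by rw [inv_inv]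
        _ = (X * Y)⁻¹ := by rw [h1]
        _ = Y⁻¹ * X⁻¹ := by rw [mul_inv_rev]
    -- membership facts
    have hmemlam : ∀ z, z ∈ lam ↔ (z = w ∨ z ∈ R) := by
      intro z
      rw [hlam, List.mem_rotate, List.mem_append]
      simp [or_comm]
    have hQnotlam : ∀ z, z ∈ Q → z ∉ lam := by
      intro z hz hzl
      rcases (hmemlam z).mp hzl with rfl | hzR
      · exact (List.nodup_cons.mp hndl).1 (List.mem_append_left _ hz)
      · exact (List.disjoint_of_nodup_append (List.nodup_cons.mp hndl).2) hz hzR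
    have hdisj : Equiv.Perm.Disjoint X⁻¹ (w :: Q).formPerm := by
      intro z
      by_cases hz : z ∈ w :: Q
      · left
        rcases List.mem_cons.mp hz with rfl | hz
        · exact inv_fix X z hXw
        · exact inv_fix X z (hXout z (hQnotlam z hz))
      · right; exact List.formPerm_apply_of_notMem hz
    have hlwQ : (w :: Q).length = p := by simp [hlQ]; omega
    have hndwQ : (w :: Q).Nodup := by
      refine List.nodup_cons.mpr ⟨fun h => (List.nodup_cons.mp hndl).1
        (List.mem_append_left _ h), ?_⟩
      exact (List.nodup_cons.mp hndl).2.of_append_left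
    refine ⟨Y⁻¹, X⁻¹ * (w :: Q).formPerm, ?_, ?_, ?_, ?_, ?_, ?_⟩
    · rw [inv_pow, hYp, inv_one]
    · rw [hdisj.commute.mul_pow, inv_pow, hXp, inv_one, one_mul, ← hlwQ]
      exact List.formPerm_pow_length_eq_one_of_nodup _ hndwQ
    · rw [← hglue, hwR]; group
    · intro z hz
      have hzlam : z ∉ lam := by
        intro hzl
        rcases (hmemlam z).mp hzl with rfl | hzR
        · exact hz (List.mem_cons_self)
        · exact hz (List.mem_cons_of_mem _ (hQR ▸ List.mem_append_right _ hzR))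
      exact inv_fix Y z (hYout z hzlam)
    · intro z hz
      have hzlam : z ∉ lam := by
        intro hzl
        rcases (hmemlam z).mp hzl with rfl | hzR
        · exact hz (List.mem_cons_self)
        · exact hz (List.mem_cons_of_mem _ (hQR ▸ List.mem_append_right _ hzR))
      have h1 := hXout z hzlam
      have h2 : (w :: Q).formPerm z = z := by
        refine List.formPerm_apply_of_notMem fun hmem => ?_
        rcases List.mem_cons.mp hmem with rfl | hmem
        · exact hz (List.mem_cons_self)
        · exact hz (List.mem_cons_of_mem _ (hQR ▸ List.mem_append_left _ hmem))
      rw [Equiv.Perm.mul_apply, h2]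
      exact inv_fix X z h1
    · intro i hi hcond
      have hj : jfn p m = 1 := by rw [jfn, if_pos (by omega)]
      rw [hj] at hcond
      have hi12 : i = 1 ∨ i = 2 := hcond
      have hiQ : (w :: lt).get ⟨i, hi⟩ ∈ Q := by
        have h1 : (w :: lt).get ⟨i, hi⟩ = lt[i - 1]'(by
            simp at hi ⊢; omega) := by
          rcases hi12 with rfl | rfl <;> rfl
        rw [h1, List.getElem_of_eq hQR, List.getElem_append_left (by omega)]
        exact List.getElem_mem _
      have hzlam : (w :: lt).get ⟨i, hi⟩ ∉ lam := hQnotlam _ hiQ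
      exact inv_fix Y _ (hYout _ hzlam)

end OddCycleP

/-- Every odd-length cycle of length at least `p` (an odd prime) is a product of
at most 3 permutations of order dividing `p`. -/
theorem odd_cycle_pwidth_le_three (p n : ℕ) (hp : p.Prime) (hodd : Odd p)
    (hn : p ≤ n) (a : Equiv.Perm (Fin n)) (ha : a.IsCycle)
    (hlen : Odd a.support.card) (hge : p ≤ a.support.card) :
    ∃ x y z : Equiv.Perm (Fin n), x ^ p = 1 ∧ y ^ p = 1 ∧ z ^ p = 1 ∧
      a = x * y * z := by
  have hp3 : 3 ≤ p := by
    rcases hodd with ⟨k, hk⟩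
    have := hp.two_le
    omega
  have hsupp : 0 < a.support.card := by omega
  obtain ⟨x₀, hx₀⟩ := Finset.card_pos.mp hsupp
  set l := a.toList x₀ with hl
  have hfp : l.formPerm = a := by
    rw [hl, Equiv.Perm.formPerm_toList, ha.cycleOf_eq (Equiv.Perm.mem_support.mp hx₀)]
  have hndl : l.Nodup := Equiv.Perm.nodup_toList a x₀
  have hlenl : l.length = a.support.card := by
    rw [hl, Equiv.Perm.length_toList, ha.cycleOf_eq (Equiv.Perm.mem_support.mp hx₀)]
  obtain ⟨x, y, hx, hy, hxy, -, -, -⟩ :=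
    OddCycleP.main_ind p hp3 hodd a.support.card hlen hge l hndl hlenl
  exact ⟨x, y, 1, hx, hy, one_pow p, by rw [← hfp, hxy, mul_one]⟩
end

section
/- Fix a prime p ≥ 5. For every n with 2p > n > (4p+3)/3, the set of products of two elements of order dividing p in A_n is a proper subset of A_n; in particular the p-width of A_n is at least 3 for such n. -/
open Equiv Equiv.Perm

section Counting

variable {α : Type*}

/-- Number of classes of a setoid. -/
noncomputable def nclasses (s : Setoid α) : ℕ := Nat.card (Quotient s)

lemma nclasses_le_of_le [Finite α] {r s : Setoid α} (h : ∀ x y, r.r x y → s.r x y) :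
    nclasses s ≤ nclasses r := by
  have hsurj : Function.Surjective
      (Quotient.map' (s₁ := r) (s₂ := s) id (fun x y hxy => h x y hxy)) := by
    rintro ⟨x⟩
    exact ⟨Quotient.mk r x, rfl⟩
  exact Nat.card_le_card_of_surjective _ hsurj

lemma nclasses_eq_of_iff [Finite α] {r s : Setoid α} (h : ∀ x y, r.r x y ↔ s.r x y) :
    nclasses r = nclasses s :=
  le_antisymm (nclasses_le_of_le fun x y hxy => (h x y).2 hxy)
    (nclasses_le_of_le fun x y hxy => (h x y).1 hxy)

lemma nclasses_eq_card [Finite α] {r : Setoid α} (h : ∀ x y, r.r x y ↔ x = y) :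
    nclasses r = Nat.card α := by
  refine (Nat.card_eq_of_bijective (Quotient.mk r)
    ⟨fun x y hxy => ?_, fun q => ⟨q.out, Quotient.out_eq q⟩⟩).symm
  exact (h x y).1 (Quotient.exact hxy)

lemma nclasses_eq_one [Finite α] [Nonempty α] {r : Setoid α} (h : ∀ x y, r.r x y) :
    nclasses r = 1 := by
  rw [nclasses, Nat.card_eq_one_iff_unique]
  refine ⟨⟨?_⟩, ⟨Quotient.mk r (Classical.arbitrary α)⟩⟩
  rintro ⟨x⟩ ⟨y⟩
  exact Quotient.sound (h x y)

/-- `r` with the classes of `a` and `b` merged, as a relation. -/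
def mrel (r : Setoid α) (a b : α) (x y : α) : Prop :=
  r.r x y ∨ ((r.r x a ∨ r.r x b) ∧ (r.r y a ∨ r.r y b))

lemma mrel_equiv (r : Setoid α) (a b : α) : Equivalence (mrel r a b) := by
  constructor
  · intro x; exact Or.inl (r.iseqv.refl x)
  · rintro x y (h | ⟨hx, hy⟩)
    · exact Or.inl (r.iseqv.symm h)
    · exact Or.inr ⟨hy, hx⟩
  · rintro x y z (hxy | ⟨hx, hy⟩) (hyz | ⟨hy', hz⟩)
    · exact Or.inl (r.iseqv.trans hxy hyz)
    · exact Or.inr ⟨hy'.imp (r.iseqv.trans hxy) (r.iseqv.trans hxy), hz⟩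
    · exact Or.inr ⟨hx, hy.imp (fun h => r.iseqv.trans (r.iseqv.symm hyz) h)
        (fun h => r.iseqv.trans (r.iseqv.symm hyz) h)⟩
    · exact Or.inr ⟨hx, hz⟩

/-- `r` with the classes of `a` and `b` merged, as a setoid. -/
def msetoid (r : Setoid α) (a b : α) : Setoid α := ⟨mrel r a b, mrel_equiv r a b⟩

/-- Merging two classes loses at most one class. -/
lemma nclasses_le_msetoid_succ [Finite α] (r : Setoid α) (a b : α) :
    nclasses r ≤ nclasses (msetoid r a b) + 1 := by
  classical
  set s := msetoid r a b with hs
  haveI : Fintype (Quotient s) := Fintype.ofFinite _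
  have hrs : ∀ x y, r.r x y → s.r x y := fun x y h => Or.inl h
  have hwd : ∀ x y, r.r x y →
      (if r.r x b then (none : Option (Quotient s)) else some (Quotient.mk s x)) =
      (if r.r y b then none else some (Quotient.mk s y)) := by
    intro x y hxy
    by_cases hxb : r.r x b
    · have hyb : r.r y b := r.iseqv.trans (r.iseqv.symm hxy) hxb
      rw [if_pos hxb, if_pos hyb]
    · have hyb : ¬ r.r y b := fun h => hxb (r.iseqv.trans hxy h)
      rw [if_neg hxb, if_neg hyb]
      exact congrArg some (Quotient.sound (hrs _ _ hxy))
  let F : Quotient r → Option (Quotient s) :=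
    Quotient.lift (fun x => if r.r x b then none else some (Quotient.mk s x)) hwd
  have hinj : Function.Injective F := by
    rintro ⟨x⟩ ⟨y⟩ hF
    change (if r.r x b then (none : Option (Quotient s)) else some (Quotient.mk s x)) =
      (if r.r y b then none else some (Quotient.mk s y)) at hF
    by_cases hxb : r.r x b <;> by_cases hyb : r.r y b
    · exact Quotient.sound (r.iseqv.trans hxb (r.iseqv.symm hyb))
    · simp [hxb, hyb] at hF
    · simp [hxb, hyb] at hF
    · rw [if_neg hxb, if_neg hyb, Option.some.injEq] at hF
      have hmx : mrel r a b x y := Quotient.exact hF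
      rcases hmx with h | ⟨hx, hy⟩
      · exact Quotient.sound h
      · have hxa : r.r x a := hx.resolve_right hxb
        have hya : r.r y a := hy.resolve_right hyb
        exact Quotient.sound (r.iseqv.trans hxa (r.iseqv.symm hya))
  have hle := Nat.card_le_card_of_injective F hinj
  have hopt : Nat.card (Option (Quotient s)) = Nat.card (Quotient s) + 1 := by
    simp [Nat.card_eq_fintype_card]
  rw [nclasses, nclasses]
  omega

/-- If `s` is coarser than `r` and identifies two distinct `r`-classes, then `s` has
strictly fewer classes. -/
lemma nclasses_succ_le [Finite α] {r s : Setoid α} (a b : α)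
    (hrs : ∀ x y, r.r x y → s.r x y) (hrab : ¬ r.r a b) (hsab : s.r a b) :
    nclasses s + 1 ≤ nclasses r := by
  classical
  haveI : Fintype (Quotient r) := Fintype.ofFinite _
  haveI : Fintype (Quotient s) := Fintype.ofFinite _
  let ψ : Quotient r → Quotient s := Quotient.map' (s₁ := r) (s₂ := s) id hrs
  have hψ : ∀ x : α, ψ (Quotient.mk r x) = Quotient.mk s x := fun x => rfl
  have hsurj : Function.Surjective
      (fun z : {z : Quotient r // ¬ z = Quotient.mk r b} => ψ z.1) := by
    rintro ⟨x⟩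
    by_cases hxb : r.r x b
    · refine ⟨⟨Quotient.mk r a, fun h => hrab (Quotient.exact h)⟩, ?_⟩
      show ψ (Quotient.mk r a) = Quotient.mk s x
      rw [hψ]
      exact Quotient.sound (s.iseqv.trans hsab (s.iseqv.symm (hrs _ _ hxb)))
    · exact ⟨⟨Quotient.mk r x, fun h => hxb (Quotient.exact h)⟩, rfl⟩
  have h1 : Fintype.card (Quotient s) ≤
      Fintype.card {z : Quotient r // ¬ z = Quotient.mk r b} :=
    Fintype.card_le_of_surjective _ hsurj
  have h3 : Fintype.card {z : Quotient r // z = Quotient.mk r b} = 1 := Fintype.card_subtype_eq _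
  have h4 := Fintype.card_subtype_compl (fun z : Quotient r => z = Quotient.mk r b)
  have h5 : 1 ≤ Fintype.card (Quotient r) := Fintype.card_pos_iff.2 ⟨Quotient.mk r b⟩
  rw [nclasses, nclasses, Nat.card_eq_fintype_card, Nat.card_eq_fintype_card]
  omega

end Counting

set_option linter.unusedSectionVars false

section PermCount

variable {α : Type*} [Fintype α] [DecidableEq α]

/-- Number of cycles of a permutation, counting fixed points. -/
noncomputable def ncyc (σ : Perm α) : ℕ := nclasses (SameCycle.setoid σ)

lemma sameCycle_closure {τ : Perm α} {m : Setoid α} (hstep : ∀ x, m.r x (τ x)) :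
    ∀ {x y : α}, τ.SameCycle x y → m.r x y := by
  have hnat : ∀ (k : ℕ) (x : α), m.r x ((τ ^ k) x) := by
    intro k
    induction k with
    | zero => intro x; simpa using m.iseqv.refl x
    | succ k ih =>
      intro x
      have h1 : (τ ^ (k + 1)) x = (τ ^ k) (τ x) := by
        rw [pow_succ]; rfl
      rw [h1]
      exact m.iseqv.trans (hstep x) (ih (τ x))
  rintro x y ⟨i, hi⟩
  rcases i with k | k
  · rw [Int.ofNat_eq_coe, zpow_natCast] at hi
    rw [← hi]; exact hnat k x
  · rw [zpow_negSucc] at hi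
    have : (τ ^ (k + 1)) y = x := by
      rw [← hi]; simp
    rw [← this]
    exact m.iseqv.symm (hnat (k + 1) y)

/-- Multiplying by a swap coarsens the cycle partition at most by merging the classes of
`a` and `b`. -/
lemma sameCycle_swap_mul_le (σ : Perm α) (a b : α) {x y : α}
    (h : (Equiv.swap a b * σ).SameCycle x y) :
    (msetoid (SameCycle.setoid σ) a b).r x y := by
  refine sameCycle_closure (τ := Equiv.swap a b * σ) ?_ h
  intro z
  show mrel (SameCycle.setoid σ) a b z (Equiv.swap a b (σ z))
  by_cases h1 : σ z = a
  · refine Or.inr ⟨Or.inl ⟨1, by simpa using h1⟩, ?_⟩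
    rw [h1, Equiv.swap_apply_left]
    exact Or.inr (SameCycle.refl σ b)
  · by_cases h2 : σ z = b
    · refine Or.inr ⟨Or.inr ⟨1, by simpa using h2⟩, ?_⟩
      rw [h2, Equiv.swap_apply_right]
      exact Or.inl (SameCycle.refl σ a)
    · rw [Equiv.swap_apply_of_ne_of_ne h1 h2]
      exact Or.inl ⟨1, by simp⟩

/-- Key exact merge fact: if `a` and `b` are in different cycles of `σ`, then they are in the
same cycle of `swap a b * σ`. -/
lemma sameCycle_swap_mul_of_not (σ : Perm α) {a b : α} (hab : ¬ σ.SameCycle a b) :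
    (Equiv.swap a b * σ).SameCycle a b := by
  set τ := Equiv.swap a b * σ with hτ
  have hτapp : ∀ z, τ z = Equiv.swap a b (σ z) := fun z => rfl
  have hstep : ∀ (i : ℕ) (x : α), σ.SameCycle a x → (σ ^ i) x = σ⁻¹ a →
      ∃ j : ℕ, (τ ^ j) x = σ⁻¹ a := by
    intro i
    induction i with
    | zero => intro x _ h0; exact ⟨0, by simpa using h0⟩
    | succ i ih =>
      intro x hax hx
      by_cases hxa : x = σ⁻¹ a
      · exact ⟨0, by simpa using hxa⟩
      · have h1 : σ x ≠ a := by
          intro h; apply hxa; rw [← h]; simp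
        have h2 : σ x ≠ b := by
          intro h
          exact hab (SameCycle.trans hax ⟨1, by simpa using h⟩)
        have hτx : τ x = σ x := by
          rw [hτapp, Equiv.swap_apply_of_ne_of_ne h1 h2]
        have hax' : σ.SameCycle a (σ x) := SameCycle.trans hax ⟨1, by simp⟩
        have hx' : (σ ^ i) (σ x) = σ⁻¹ a := by
          have : (σ ^ (i + 1)) x = (σ ^ i) (σ x) := by rw [pow_succ]; rfl
          rw [← this]; exact hx
        obtain ⟨j, hj⟩ := ih (σ x) hax' hx'
        refine ⟨j + 1, ?_⟩
        have : (τ ^ (j + 1)) x = (τ ^ j) (τ x) := by rw [pow_succ]; rfl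
        rw [this, hτx, hj]
  have hsc : σ.SameCycle a (σ⁻¹ a) := ⟨-1, by simp⟩
  obtain ⟨i, _, hi⟩ := hsc.exists_pow_eq'
  obtain ⟨j, hj⟩ := hstep i a (SameCycle.refl σ a) hi
  refine ⟨(j + 1 : ℕ), ?_⟩
  rw [zpow_natCast]
  have : (τ ^ (j + 1)) a = τ ((τ ^ j) a) := by rw [pow_succ']; rfl
  rw [this, hj, hτapp]
  simp

/-- Multiplying by a swap increases the number of cycles by at most one. -/
lemma ncyc_swap_mul_le (σ : Perm α) (a b : α) :
    ncyc (Equiv.swap a b * σ) ≤ ncyc σ + 1 := by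
  -- apply the merged-setoid machinery with roles exchanged
  set τ := Equiv.swap a b * σ with hτ
  have hστ : σ = Equiv.swap a b * τ := by
    rw [hτ, ← mul_assoc, Equiv.swap_mul_self, one_mul]
  -- SameCycle σ ≤ msetoid (SameCycle τ) a b
  have hle : ∀ x y, (SameCycle.setoid σ).r x y → (msetoid (SameCycle.setoid τ) a b).r x y := by
    intro x y hxy
    rw [hστ] at hxy
    exact sameCycle_swap_mul_le τ a b hxy
  have h1 : nclasses (msetoid (SameCycle.setoid τ) a b) ≤ nclasses (SameCycle.setoid σ) :=
    nclasses_le_of_le hle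
  have h2 := nclasses_le_msetoid_succ (SameCycle.setoid τ) a b
  calc ncyc τ ≤ nclasses (msetoid (SameCycle.setoid τ) a b) + 1 := h2
    _ ≤ ncyc σ + 1 := by exact Nat.add_le_add_right h1 1

/-- Multiplying by a swap joining two distinct cycles decreases the cycle count. -/
lemma ncyc_swap_mul_merge (σ : Perm α) {a b : α} (hab : ¬ σ.SameCycle a b) :
    ncyc (Equiv.swap a b * σ) + 1 ≤ ncyc σ := by
  set τ := Equiv.swap a b * σ with hτ
  have hτab : τ.SameCycle a b := sameCycle_swap_mul_of_not σ hab
  -- SameCycle σ ≤ SameCycle τ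
  have hle : ∀ x y, (SameCycle.setoid σ).r x y → (SameCycle.setoid τ).r x y := by
    intro x y hxy
    have hστ : σ = Equiv.swap a b * τ := by
      rw [hτ, ← mul_assoc, Equiv.swap_mul_self, one_mul]
    have h := sameCycle_swap_mul_le τ a b (x := x) (y := y) (by rwa [← hστ])
    rcases h with h | ⟨hx, hy⟩
    · exact h
    · have hx' : τ.SameCycle x a := hx.elim id (fun h => h.trans hτab.symm)
      have hy' : τ.SameCycle y a := hy.elim id (fun h => h.trans hτab.symm)
      exact hx'.trans hy'.symm
  exact nclasses_succ_le a b hle hab hτab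

end PermCount

section Graph

variable {α : Type*} [Fintype α] [DecidableEq α]

/-- Product of a list of swaps. -/
def prodSwaps (L : List (α × α)) : Equiv.Perm α := (L.map fun e => Equiv.swap e.1 e.2).prod

@[simp] lemma prodSwaps_nil : prodSwaps ([] : List (α × α)) = 1 := rfl

lemma prodSwaps_cons (e : α × α) (L : List (α × α)) :
    prodSwaps (e :: L) = Equiv.swap e.1 e.2 * prodSwaps L := by
  simp [prodSwaps]

lemma prodSwaps_append (A B : List (α × α)) :
    prodSwaps (A ++ B) = prodSwaps A * prodSwaps B := by
  simp [prodSwaps]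

lemma prodSwaps_reverse (L : List (α × α)) :
    prodSwaps L.reverse = (prodSwaps L)⁻¹ := by
  induction L with
  | nil => simp
  | cons e L ih =>
    rw [List.reverse_cons, prodSwaps_append, prodSwaps_cons, ih]
    simp [prodSwaps, mul_assoc]

/-- Edge relation of a list of pairs. -/
def edgeRel (L : List (α × α)) (u v : α) : Prop := (u, v) ∈ L ∨ (v, u) ∈ L

/-- Connectivity relation of the graph given by a list of pairs. -/
def Reach (L : List (α × α)) (u v : α) : Prop := Relation.EqvGen (edgeRel L) u v

lemma Reach.refl (L : List (α × α)) (u : α) : Reach L u u := Relation.EqvGen.refl u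

lemma Reach.symm {L : List (α × α)} {u v : α} (h : Reach L u v) : Reach L v u :=
  Relation.EqvGen.symm _ _ h

lemma Reach.trans {L : List (α × α)} {u v w : α} (h : Reach L u v) (h' : Reach L v w) :
    Reach L u w := Relation.EqvGen.trans _ _ _ h h'

lemma Reach.mono {L L' : List (α × α)} (hsub : ∀ e ∈ L, e ∈ L') {u v : α}
    (h : Reach L u v) : Reach L' u v :=
  Relation.EqvGen.mono (fun a b hab => hab.imp (hsub _) (hsub _)) _ _ h

lemma reach_of_mem {L : List (α × α)} {e : α × α} (he : e ∈ L) : Reach L e.1 e.2 :=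
  Relation.EqvGen.rel _ _ (Or.inl (by simpa using he))

/-- Setoid of connectivity. -/
def reachSetoid (L : List (α × α)) : Setoid α :=
  ⟨Reach L, ⟨Reach.refl L, Reach.symm, Reach.trans⟩⟩

lemma reachSetoid_r {L : List (α × α)} {u v : α} :
    (reachSetoid L).r u v ↔ Reach L u v := Iff.rfl

/-- Number of connected components (isolated vertices included). -/
noncomputable def ncomp (L : List (α × α)) : ℕ := nclasses (reachSetoid L)

lemma reach_nil {u v : α} (h : Reach ([] : List (α × α)) u v) : u = v := by
  induction h with
  | rel a b hab => rcases hab with h | h <;> simp at h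
  | refl => rfl
  | symm a b _ ih => exact ih.symm
  | trans a b c _ _ ih1 ih2 => exact ih1.trans ih2

lemma ncomp_nil : ncomp ([] : List (α × α)) = Nat.card α :=
  nclasses_eq_card (fun x y => ⟨fun h => reach_nil h, fun h => h ▸ Reach.refl _ x⟩)

/-- cycles of the product refine the components. -/
lemma reach_apply (L : List (α × α)) (z : α) : Reach L z (prodSwaps L z) := by
  induction L generalizing z with
  | nil => simpa using Reach.refl _ z
  | cons e M ih =>
    have h1 : Reach M z (prodSwaps M z) := ih z
    have h2 : Reach (e :: M) z (prodSwaps M z) :=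
      h1.mono (fun f hf => List.mem_cons_of_mem _ hf)
    rw [prodSwaps_cons]
    set w := prodSwaps M z with hw
    show Reach (e :: M) z (Equiv.swap e.1 e.2 w)
    by_cases hwa : w = e.1
    · rw [hwa, Equiv.swap_apply_left]
      exact h2.trans (hwa ▸ reach_of_mem (List.mem_cons_self (a := e) (l := M)))
    · by_cases hwb : w = e.2
      · rw [hwb, Equiv.swap_apply_right]
        exact h2.trans (hwb ▸ (reach_of_mem (List.mem_cons_self (a := e) (l := M))).symm)
      · rw [Equiv.swap_apply_of_ne_of_ne hwa hwb]
        exact h2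

lemma sameCycle_prodSwaps_reach (L : List (α × α)) {x y : α}
    (h : (prodSwaps L).SameCycle x y) : Reach L x y :=
  sameCycle_closure (m := reachSetoid L) (reach_apply L) h

lemma reach_cons_cases {e : α × α} {L : List (α × α)} {x y : α} (h : Reach (e :: L) x y) :
    (msetoid (reachSetoid L) e.1 e.2).r x y := by
  induction h with
  | rel a b hab =>
    rcases hab with hm | hm <;> rw [List.mem_cons] at hm
    · rcases hm with hm | hm
      · have h1 : a = e.1 := by rw [← hm]
        have h2 : b = e.2 := by rw [← hm]
        subst h1; subst h2
        exact Or.inr ⟨Or.inl (Reach.refl _ _), Or.inr (Reach.refl _ _)⟩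
      · exact Or.inl (Relation.EqvGen.rel _ _ (Or.inl hm))
    · rcases hm with hm | hm
      · have h1 : b = e.1 := by rw [← hm]
        have h2 : a = e.2 := by rw [← hm]
        subst h1; subst h2
        exact Or.inr ⟨Or.inr (Reach.refl _ _), Or.inl (Reach.refl _ _)⟩
      · exact Or.inl (Relation.EqvGen.rel _ _ (Or.inr hm))
  | refl a => exact (msetoid (reachSetoid L) e.1 e.2).iseqv.refl a
  | symm a b _ ih => exact (msetoid (reachSetoid L) e.1 e.2).iseqv.symm ih
  | trans a b c _ _ ih1 ih2 => exact (msetoid (reachSetoid L) e.1 e.2).iseqv.trans ih1 ih2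

lemma ncomp_cons_le (e : α × α) (L : List (α × α)) :
    ncomp L ≤ ncomp (e :: L) + 1 := by
  have h1 : ncomp L ≤ nclasses (msetoid (reachSetoid L) e.1 e.2) + 1 :=
    nclasses_le_msetoid_succ _ _ _
  have h2 : nclasses (msetoid (reachSetoid L) e.1 e.2) ≤ ncomp (e :: L) :=
    nclasses_le_of_le (fun x y hxy => reach_cons_cases hxy)
  omega

lemma ncomp_cons_eq (e : α × α) (L : List (α × α)) (h : Reach L e.1 e.2) :
    ncomp (e :: L) = ncomp L := by
  refine nclasses_eq_of_iff (fun x y => ⟨fun hxy => ?_, fun hxy =>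
    Reach.mono (fun f hf => List.mem_cons_of_mem _ hf) hxy⟩)
  have hm := reach_cons_cases (e := e) (L := L) hxy
  rcases hm with hm | ⟨hx, hy⟩
  · exact hm
  · have hx' : Reach L x e.1 := hx.elim id (fun h' => h'.trans h.symm)
    have hy' : Reach L y e.1 := hy.elim id (fun h' => h'.trans h.symm)
    exact hx'.trans hy'.symm

/-- **Key inequality** (Ree-type bound): cycles of a product of swaps are bounded via the
number of connected components of the swap graph. -/
lemma key_ineq (L : List (α × α)) :
    ncyc (prodSwaps L) + Nat.card α ≤ L.length + 2 * ncomp L := by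
  induction L with
  | nil =>
    rw [prodSwaps_nil, ncomp_nil]
    have h1 : ncyc (1 : Equiv.Perm α) = Nat.card α :=
      nclasses_eq_card (fun x y => Equiv.Perm.sameCycle_one)
    omega
  | cons e M ih =>
    rw [prodSwaps_cons]
    by_cases h : Reach M e.1 e.2
    · have h1 : ncyc (Equiv.swap e.1 e.2 * prodSwaps M) ≤ ncyc (prodSwaps M) + 1 :=
        ncyc_swap_mul_le _ _ _
      rw [ncomp_cons_eq e M h, List.length_cons]
      omega
    · have hsc : ¬ (prodSwaps M).SameCycle e.1 e.2 :=
        fun hc => h (sameCycle_prodSwaps_reach M hc)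
      have h1 : ncyc (Equiv.swap e.1 e.2 * prodSwaps M) + 1 ≤ ncyc (prodSwaps M) :=
        ncyc_swap_mul_merge _ hsc
      have h2 := ncomp_cons_le e M
      rw [List.length_cons]
      omega

end Graph

section CycleDec

variable {α : Type*} [Fintype α] [DecidableEq α]

/-- Every cycle is a product of a connected chain of swaps on its support. -/
lemma cycle_dec {f : Equiv.Perm α} (hf : f.IsCycle) :
    ∃ L : List (α × α), prodSwaps L = f ∧ L.length + 1 = f.support.card ∧
      (∀ e ∈ L, e.1 ∈ f.support ∧ e.2 ∈ f.support) ∧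
      (∀ u ∈ f.support, ∀ v ∈ f.support, Reach L u v) := by
  generalize hc : f.support.card = c
  induction c using Nat.strong_induction_on generalizing f with
  | _ c ih =>
  have h2 : 2 ≤ f.support.card := hf.two_le_card_support
  by_cases hcard : f.support.card = 2
  · obtain ⟨a, b, hab, hswap⟩ := Equiv.Perm.card_support_eq_two.1 hcard
    refine ⟨[(a, b)], ?_, ?_, ?_, ?_⟩
    · simp [prodSwaps, hswap]
    · simp [hcard, ← hc, hcard]
    · intro e he
      simp only [List.mem_singleton] at he
      subst he
      rw [hswap, Equiv.Perm.support_swap hab]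
      simp
    · intro u hu v hv
      rw [hswap, Equiv.Perm.support_swap hab] at hu hv
      simp only [Finset.mem_insert, Finset.mem_singleton] at hu hv
      have edge : Reach [(a, b)] a b := reach_of_mem (List.mem_singleton_self _)
      rcases hu with rfl | rfl <;> rcases hv with rfl | rfl
      · exact Reach.refl _ _
      · exact edge
      · exact edge.symm
      · exact Reach.refl _ _
  · -- card ≥ 3
    obtain ⟨x, hx, -⟩ := id hf
    have hx' : f x ≠ x := hx
    have hmemx : x ∈ f.support := Equiv.Perm.mem_support.2 hx'
    have hffx : f (f x) ≠ x := by
      intro hcon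
      -- then support ⊆ {x, f x}, card ≤ 2, contradiction
      apply hcard
      have hsub : f.support ⊆ {x, f x} := by
        intro y hy
        have hsc : f.SameCycle x y := hf.sameCycle hx' (Equiv.Perm.mem_support.1 hy)
        -- show the f-orbit of x is within {x, f x}
        have hS : ∀ k : ℕ, (f ^ k) x = x ∨ (f ^ k) x = f x := by
          intro k
          induction k with
          | zero => simp
          | succ k ihk =>
            have hstep : (f ^ (k+1)) x = f ((f ^ k) x) := by rw [pow_succ']; rfl
            rcases ihk with h | h <;> rw [hstep, h]
            · right; rfl
            · left; exact hcon
        obtain ⟨i, hiord, hieq⟩ := hsc.exists_pow_eq'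
        rcases hS i with h | h <;> rw [hieq] at h <;> simp [Finset.mem_insert, h]
      have := Finset.card_le_card hsub
      have hc2 : ({x, f x} : Finset α).card ≤ 2 := Finset.card_insert_le _ _ |>.trans (by simp)
      omega
    have hfx' : Equiv.Perm.IsCycle (Equiv.swap x (f x) * f) := hf.swap_mul hx' hffx
    have hsupp : (Equiv.swap x (f x) * f).support = f.support \ {x} :=
      Equiv.Perm.support_swap_mul_eq f x hffx
    have hcard' : (Equiv.swap x (f x) * f).support.card = f.support.card - 1 := by
      rw [hsupp, Finset.card_sdiff_of_subset (by simpa using hmemx)]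
      simp
    obtain ⟨L', hprod, hlen, hmem, hreach⟩ :=
      ih (c - 1) (by omega) hfx' (by omega)
    refine ⟨(x, f x) :: L', ?_, ?_, ?_, ?_⟩
    · rw [prodSwaps_cons, hprod, ← mul_assoc, Equiv.swap_mul_self, one_mul]
    · simp only [List.length_cons]
      omega
    · rintro e he
      rcases List.mem_cons.1 he with rfl | he'
      · exact ⟨hmemx, Equiv.Perm.apply_mem_support.2 hmemx⟩
      · have := hmem e he'
        rw [hsupp] at this
        exact ⟨(Finset.mem_sdiff.1 this.1).1, (Finset.mem_sdiff.1 this.2).1⟩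
    · -- connectivity
      have hfxmem : f x ∈ (Equiv.swap x (f x) * f).support := by
        rw [hsupp, Finset.mem_sdiff]
        refine ⟨Equiv.Perm.apply_mem_support.2 hmemx, ?_⟩
        simpa using hx'
      have hmono : ∀ u v, Reach L' u v → Reach ((x, f x) :: L') u v :=
        fun u v h => h.mono (fun e he => List.mem_cons_of_mem _ he)
      have hedge : Reach ((x, f x) :: L') x (f x) :=
        reach_of_mem List.mem_cons_self
      intro u hu v hv
      have key : ∀ w ∈ f.support, Reach ((x, f x) :: L') w (f x) := by
        intro w hw
        by_cases hwx : w = x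
        · exact hwx ▸ hedge
        · have hw' : w ∈ (Equiv.swap x (f x) * f).support := by
            rw [hsupp, Finset.mem_sdiff]
            exact ⟨hw, by simpa using hwx⟩
          exact hmono _ _ (hreach w hw' (f x) hfxmem)
      exact (key u hu).trans (key v hv).symm

end CycleDec

section Construction

/-- `m % n` as an element of `Fin n`. -/
def cc (n : ℕ) (hn : 0 < n) (m : ℕ) : Fin n := ⟨m % n, Nat.mod_lt m hn⟩

lemma cc_val {n : ℕ} (hn : 0 < n) {m : ℕ} (hm : m < n) : (cc n hn m).val = m :=
  Nat.mod_eq_of_lt hm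

lemma cc_ne {n : ℕ} (hn : 0 < n) {a b : ℕ} (ha : a < n) (hb : b < n) (hab : a ≠ b) :
    cc n hn a ≠ cc n hn b := by
  intro h
  apply hab
  have := congrArg Fin.val h
  rwa [cc_val hn ha, cc_val hn hb] at this

/-- chains of three-element blocks `3i, 3i+1, 3i+2` for `i < N`. -/
def blocksA (n : ℕ) (hn : 0 < n) : ℕ → List (Fin n × Fin n)
  | 0 => []
  | i+1 => blocksA n hn i ++
      [(cc n hn (3*i), cc n hn (3*i+1)), (cc n hn (3*i+1), cc n hn (3*i+2))]

/-- two-element blocks `3j+2i, 3j+2i+1` for `i < N`. -/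
def blocksB (n : ℕ) (hn : 0 < n) (j : ℕ) : ℕ → List (Fin n × Fin n)
  | 0 => []
  | i+1 => blocksB n hn j i ++ [(cc n hn (3*j+2*i), cc n hn (3*j+2*i+1))]

lemma blocksA_length (n : ℕ) (hn : 0 < n) (N : ℕ) : (blocksA n hn N).length = 2 * N := by
  induction N with
  | zero => rfl
  | succ N ih => simp [blocksA, ih]; try omega

lemma blocksB_length (n : ℕ) (hn : 0 < n) (j N : ℕ) : (blocksB n hn j N).length = N := by
  induction N with
  | zero => rfl
  | succ N ih => simp [blocksB, ih]; try omega

lemma blocksA_mem {n : ℕ} {hn : 0 < n} {N : ℕ} {e : Fin n × Fin n} (he : e ∈ blocksA n hn N) :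
    ∃ i < N, e = (cc n hn (3*i), cc n hn (3*i+1)) ∨ e = (cc n hn (3*i+1), cc n hn (3*i+2)) := by
  induction N with
  | zero => simp [blocksA] at he
  | succ N ih =>
    rw [blocksA, List.mem_append] at he
    rcases he with he | he
    · obtain ⟨i, hi, h⟩ := ih he
      exact ⟨i, by omega, h⟩
    · simp only [List.mem_cons, List.mem_singleton, List.not_mem_nil, or_false] at he
      exact ⟨N, by omega, he⟩

lemma blocksB_mem {n : ℕ} {hn : 0 < n} {j N : ℕ} {e : Fin n × Fin n}
    (he : e ∈ blocksB n hn j N) :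
    ∃ i < N, e = (cc n hn (3*j+2*i), cc n hn (3*j+2*i+1)) := by
  induction N with
  | zero => simp [blocksB] at he
  | succ N ih =>
    rw [blocksB, List.mem_append] at he
    rcases he with he | he
    · obtain ⟨i, hi, h⟩ := ih he
      exact ⟨i, by omega, h⟩
    · simp only [List.mem_singleton] at he
      exact ⟨N, by omega, he⟩

variable {n : ℕ}

lemma prodSwaps_fix {L : List (Fin n × Fin n)} {v : Fin n}
    (h : ∀ e ∈ L, e.1 ≠ v ∧ e.2 ≠ v) : prodSwaps L v = v := by
  induction L with
  | nil => rfl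
  | cons e M ih =>
    rw [prodSwaps_cons]
    have h1 := h e List.mem_cons_self
    have h2 : prodSwaps M v = v := ih (fun f hf => h f (List.mem_cons_of_mem _ hf))
    show Equiv.swap e.1 e.2 (prodSwaps M v) = v
    rw [h2, Equiv.swap_apply_of_ne_of_ne (Ne.symm h1.1) (Ne.symm h1.2)]

lemma blocksA_eval (hn : 0 < n) (N : ℕ) (hN : 3 * N ≤ n) :
    ∀ i < N, prodSwaps (blocksA n hn N) (cc n hn (3*i)) = cc n hn (3*i+1) ∧
      prodSwaps (blocksA n hn N) (cc n hn (3*i+1)) = cc n hn (3*i+2) ∧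
      prodSwaps (blocksA n hn N) (cc n hn (3*i+2)) = cc n hn (3*i) := by
  induction N with
  | zero => omega
  | succ N ih =>
    intro i hi
    have hNn : 3 * N ≤ n := by omega
    have hA := fun (m : ℕ) (hm : m < n) (hout : ∀ i' < N, m ≠ 3*i' ∧ m ≠ 3*i'+1 ∧ m ≠ 3*i'+2) =>
      prodSwaps_fix (L := blocksA n hn N) (v := cc n hn m) (by
        intro e he
        obtain ⟨i', hi', h | h⟩ := blocksA_mem he <;> subst h <;>
          exact ⟨cc_ne hn (by omega) hm (by have := hout i' hi'; omega),
                 cc_ne hn (by omega) hm (by have := hout i' hi'; omega)⟩)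
    have hE : prodSwaps (blocksA n hn (N+1)) =
        prodSwaps (blocksA n hn N) *
          (Equiv.swap (cc n hn (3*N)) (cc n hn (3*N+1)) *
           Equiv.swap (cc n hn (3*N+1)) (cc n hn (3*N+2))) := by
      rw [blocksA, prodSwaps_append]
      simp [prodSwaps]
    by_cases hiN : i < N
    · obtain ⟨e1, e2, e3⟩ := ih hNn i hiN
      have hfix : ∀ r : ℕ, r < 3 →
          (Equiv.swap (cc n hn (3*N)) (cc n hn (3*N+1)) *
           Equiv.swap (cc n hn (3*N+1)) (cc n hn (3*N+2))) (cc n hn (3*i+r)) =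
            cc n hn (3*i+r) := by
        intro r hr
        have h1 : cc n hn (3*i+r) ≠ cc n hn (3*N) := cc_ne hn (by omega) (by omega) (by omega)
        have h2 : cc n hn (3*i+r) ≠ cc n hn (3*N+1) := cc_ne hn (by omega) (by omega) (by omega)
        have h3 : cc n hn (3*i+r) ≠ cc n hn (3*N+2) := cc_ne hn (by omega) (by omega) (by omega)
        show Equiv.swap _ _ (Equiv.swap _ _ _) = _
        rw [Equiv.swap_apply_of_ne_of_ne h2 h3, Equiv.swap_apply_of_ne_of_ne h1 h2]
      refine ⟨?_, ?_, ?_⟩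
      · have h0 := hfix 0 (by omega)
        simp only [Nat.add_zero] at h0
        rw [hE, Equiv.Perm.mul_apply, h0, e1]
      · rw [hE, Equiv.Perm.mul_apply, hfix 1 (by omega), e2]
      · rw [hE, Equiv.Perm.mul_apply, hfix 2 (by omega), e3]
    · have hiN' : i = N := by omega
      subst hiN'
      set a := cc n hn (3*i) with ha
      set b := cc n hn (3*i+1) with hb
      set c := cc n hn (3*i+2) with hc2
      have hd01 : a ≠ b := cc_ne hn (by omega) (by omega) (by omega)
      have hd02 : a ≠ c := cc_ne hn (by omega) (by omega) (by omega)
      have hd12 : b ≠ c := cc_ne hn (by omega) (by omega) (by omega)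
      have houter : ∀ r : ℕ, r < 3 → prodSwaps (blocksA n hn i) (cc n hn (3*i+r)) =
          cc n hn (3*i+r) := fun r hr => hA (3*i+r) (by omega) (fun i' hi' => by omega)
      have hPa : (Equiv.swap a b * Equiv.swap b c) a = b := by
        show Equiv.swap a b (Equiv.swap b c a) = b
        rw [Equiv.swap_apply_of_ne_of_ne hd01 hd02, Equiv.swap_apply_left]
      have hPb : (Equiv.swap a b * Equiv.swap b c) b = c := by
        show Equiv.swap a b (Equiv.swap b c b) = c
        rw [Equiv.swap_apply_left, Equiv.swap_apply_of_ne_of_ne hd02.symm hd12.symm]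
      have hPc : (Equiv.swap a b * Equiv.swap b c) c = a := by
        show Equiv.swap a b (Equiv.swap b c c) = a
        rw [Equiv.swap_apply_right, Equiv.swap_apply_right]
      have h0 : cc n hn (3*i) = a := rfl
      have h1 : cc n hn (3*i+1) = b := rfl
      have h2 : cc n hn (3*i+2) = c := rfl
      refine ⟨?_, ?_, ?_⟩
      · rw [hE, Equiv.Perm.mul_apply, hPa, hb]
        exact houter 1 (by omega)
      · rw [hE, Equiv.Perm.mul_apply, hPb, hc2]
        exact houter 2 (by omega)
      · rw [hE, Equiv.Perm.mul_apply, hPc, ha]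
        simpa using houter 0 (by omega)

lemma blocksB_eval (hn : 0 < n) (j N : ℕ) (hN : 3 * j + 2 * N ≤ n) :
    ∀ i < N, prodSwaps (blocksB n hn j N) (cc n hn (3*j+2*i)) = cc n hn (3*j+2*i+1) ∧
      prodSwaps (blocksB n hn j N) (cc n hn (3*j+2*i+1)) = cc n hn (3*j+2*i) := by
  induction N with
  | zero => omega
  | succ N ih =>
    intro i hi
    have hNn : 3 * j + 2 * N ≤ n := by omega
    have hB := fun (m : ℕ) (hm : m < n) (hout : ∀ i' < N, m ≠ 3*j+2*i' ∧ m ≠ 3*j+2*i'+1) =>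
      prodSwaps_fix (L := blocksB n hn j N) (v := cc n hn m) (by
        intro e he
        obtain ⟨i', hi', h⟩ := blocksB_mem he
        subst h
        exact ⟨cc_ne hn (by omega) hm (by have := hout i' hi'; omega),
               cc_ne hn (by omega) hm (by have := hout i' hi'; omega)⟩)
    have hE : prodSwaps (blocksB n hn j (N+1)) =
        prodSwaps (blocksB n hn j N) *
          Equiv.swap (cc n hn (3*j+2*N)) (cc n hn (3*j+2*N+1)) := by
      rw [blocksB, prodSwaps_append]
      simp [prodSwaps]
    by_cases hiN : i < N
    · obtain ⟨e1, e2⟩ := ih hNn i hiN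
      have hfix : ∀ r : ℕ, r < 2 →
          Equiv.swap (cc n hn (3*j+2*N)) (cc n hn (3*j+2*N+1)) (cc n hn (3*j+2*i+r)) =
            cc n hn (3*j+2*i+r) := by
        intro r hr
        exact Equiv.swap_apply_of_ne_of_ne
          (cc_ne hn (by omega) (by omega) (by omega))
          (cc_ne hn (by omega) (by omega) (by omega))
      constructor
      · have h0 := hfix 0 (by omega)
        simp only [Nat.add_zero] at h0
        rw [hE, Equiv.Perm.mul_apply, h0, e1]
      · rw [hE, Equiv.Perm.mul_apply, hfix 1 (by omega), e2]
    · have hiN' : i = N := by omega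
      subst hiN'
      have hd : cc n hn (3*j+2*i) ≠ cc n hn (3*j+2*i+1) :=
        cc_ne hn (by omega) (by omega) (by omega)
      have houter : ∀ r : ℕ, r < 2 → prodSwaps (blocksB n hn j i) (cc n hn (3*j+2*i+r)) =
          cc n hn (3*j+2*i+r) := fun r hr => hB (3*j+2*i+r) (by omega) (fun i' hi' => by omega)
      constructor
      · rw [hE, Equiv.Perm.mul_apply, Equiv.swap_apply_left]
        exact houter 1 (by omega)
      · rw [hE, Equiv.Perm.mul_apply, Equiv.swap_apply_right]
        simpa using houter 0 (by omega)

end Construction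

section Main

lemma classify_order {n p : ℕ} (hp : p.Prime) (h2 : n < 2 * p) (z : Equiv.Perm (Fin n))
    (hz : z ^ p = 1) : z = 1 ∨ (z.IsCycle ∧ z.support.card = p) := by
  by_cases h1 : z = 1
  · exact Or.inl h1
  right
  haveI : Fact p.Prime := ⟨hp⟩
  have hord : orderOf z = p := orderOf_eq_prime hz h1
  have hcyc : z.IsCycle := by
    apply Equiv.Perm.isCycle_of_prime_order (by rwa [hord])
    rw [hord]
    calc z.support.card ≤ Fintype.card (Fin n) := z.support.card_le_univ
      _ = n := Fintype.card_fin n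
      _ < 2 * p := h2
  refine ⟨hcyc, ?_⟩
  rw [← hcyc.orderOf]
  exact hord

/-- For `p ≥ 5` prime and `2p > n > (4p+3)/3`, not every element of `A_n` is a
product of two elements of order dividing `p`; hence the `p`-width is at least 3. -/
theorem pwidth_at_least_three (p n : ℕ) (hp : p.Prime) (hp5 : 5 ≤ p)
    (h1 : 4 * p + 3 < 3 * n) (h2 : n < 2 * p) :
    ∃ g ∈ alternatingGroup (Fin n), ∀ x y : Equiv.Perm (Fin n),
      x ^ p = 1 → y ^ p = 1 → g ≠ x * y := by
  have hn0 : 0 < n := by omega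
  have hp2 : 2 ≤ p := hp.two_le
  set j := (4 - n % 4) % 4 with hjdef
  set k := (n - 3 * j) / 2 with hkdef
  have hj4 : j < 4 := by omega
  have hn8 : 8 ≤ n := by omega
  have hn3j : 3 * j ≤ n := by omega
  have hnjk : n = 3 * j + 2 * k := by omega
  have hkeven : k % 2 = 0 := by omega
  have hineq : 2 * p + 1 ≤ 4 * j + 3 * k := by omega
  have hpn : p < n := by omega
  set Lg := blocksA n hn0 j ++ blocksB n hn0 j k with hLg
  set g := prodSwaps Lg with hg
  have hglen : Lg.length = 2 * j + k := by
    rw [hLg, List.length_append, blocksA_length, blocksB_length]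
  have hLgmem : ∀ e ∈ Lg, ∃ a b : ℕ, a < n ∧ b < n ∧ a ≠ b ∧ e = (cc n hn0 a, cc n hn0 b) := by
    intro e he
    rw [hLg] at he
    rcases List.mem_append.1 he with he' | he'
    · obtain ⟨i, hi, h | h⟩ := blocksA_mem he'
      · exact ⟨3*i, 3*i+1, by omega, by omega, by omega, h⟩
      · exact ⟨3*i+1, 3*i+2, by omega, by omega, by omega, h⟩
    · obtain ⟨i, hi, h⟩ := blocksB_mem he'
      exact ⟨3*j+2*i, 3*j+2*i+1, by omega, by omega, by omega, h⟩
  have hgswap : ∀ f ∈ Lg.map (fun e => Equiv.swap e.1 e.2), f.IsSwap := by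
    intro f hf
    obtain ⟨e, he, rfl⟩ := List.mem_map.1 hf
    obtain ⟨a, b, ha, hb, hab, rfl⟩ := hLgmem e he
    exact ⟨_, _, cc_ne hn0 ha hb hab, rfl⟩
  have hsign : g ∈ alternatingGroup (Fin n) := by
    rw [Equiv.Perm.mem_alternatingGroup, hg, prodSwaps,
      Equiv.Perm.sign_prod_list_swap hgswap, List.length_map, hglen]
    exact (Nat.even_iff.2 (by omega)).neg_one_pow
  have hgne : ∀ v : Fin n, g v ≠ v := by
    intro v
    have hvn : (v : ℕ) < n := v.isLt
    have hvcc : cc n hn0 (v : ℕ) = v := Fin.ext (cc_val hn0 v.isLt)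
    rw [← hvcc]
    set m := (v : ℕ) with hm
    have hsplit : prodSwaps Lg (cc n hn0 m) =
        prodSwaps (blocksA n hn0 j) (prodSwaps (blocksB n hn0 j k) (cc n hn0 m)) := by
      rw [hLg, prodSwaps_append]; rfl
    by_cases hm3 : m < 3 * j
    · have hBfix : prodSwaps (blocksB n hn0 j k) (cc n hn0 m) = cc n hn0 m := by
        apply prodSwaps_fix
        intro e he
        obtain ⟨i, hi, h⟩ := blocksB_mem he
        subst h
        exact ⟨cc_ne hn0 (by omega) (by omega) (by omega),
               cc_ne hn0 (by omega) (by omega) (by omega)⟩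
      set i := m / 3 with hidef
      have hi : i < j := by omega
      have hA := blocksA_eval hn0 j hn3j i hi
      rcases (by omega : m = 3*i ∨ m = 3*i+1 ∨ m = 3*i+2) with hmi | hmi | hmi
      · rw [hg, hsplit, hBfix, hmi, hA.1]
        exact cc_ne hn0 (by omega) (by omega) (by omega)
      · rw [hg, hsplit, hBfix, hmi, hA.2.1]
        exact cc_ne hn0 (by omega) (by omega) (by omega)
      · rw [hg, hsplit, hBfix, hmi, hA.2.2]
        exact cc_ne hn0 (by omega) (by omega) (by omega)
    · have hAfix : ∀ m' : ℕ, 3*j ≤ m' → m' < n →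
          prodSwaps (blocksA n hn0 j) (cc n hn0 m') = cc n hn0 m' := by
        intro m' h3 hn'
        apply prodSwaps_fix
        intro e he
        obtain ⟨i', hi', h | h⟩ := blocksA_mem he <;> subst h <;>
          exact ⟨cc_ne hn0 (by omega) hn' (by omega), cc_ne hn0 (by omega) hn' (by omega)⟩
      set i := (m - 3*j)/2 with hidef
      have hi : i < k := by omega
      have hB := blocksB_eval hn0 j k (by omega) i hi
      rcases (by omega : m = 3*j+2*i ∨ m = 3*j+2*i+1) with hmi | hmi
      · rw [hg, hsplit, hmi, hB.1, hAfix _ (by omega) (by omega)]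
        exact cc_ne hn0 (by omega) (by omega) (by omega)
      · rw [hg, hsplit, hmi, hB.2, hAfix _ (by omega) (by omega)]
        exact cc_ne hn0 (by omega) (by omega) (by omega)
  refine ⟨g, hsign, ?_⟩
  intro x y hxp hyp hcon
  have hmoves : ∀ v : Fin n, v ∈ x.support ∨ v ∈ y.support := by
    intro v
    by_contra hcon2
    push_neg at hcon2
    obtain ⟨hvx, hvy⟩ := hcon2
    apply hgne v
    rw [hcon]
    show x (y v) = v
    rw [Equiv.Perm.notMem_support.1 hvy, Equiv.Perm.notMem_support.1 hvx]
  have hfixfree : ∀ z : Equiv.Perm (Fin n), z.support.card = p → g ≠ z := by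
    intro z hzcard hgz
    have : ∃ v : Fin n, v ∉ z.support := by
      by_contra hall
      push_neg at hall
      have huniv : z.support = Finset.univ := Finset.eq_univ_iff_forall.2 hall
      rw [huniv, Finset.card_univ, Fintype.card_fin] at hzcard
      omega
    obtain ⟨v, hv⟩ := this
    exact hgne v (by rw [hgz]; exact Equiv.Perm.notMem_support.1 hv)
  rcases classify_order hp h2 x hxp with hx1 | ⟨hxc, hxcard⟩
  · rcases classify_order hp h2 y hyp with hy1 | ⟨hyc, hycard⟩
    · subst hx1; subst hy1
      rw [mul_one] at hcon
      exact hgne ⟨0, hn0⟩ (by simp [hcon])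
    · subst hx1
      rw [one_mul] at hcon
      exact hfixfree y hycard hcon
  · rcases classify_order hp h2 y hyp with hy1 | ⟨hyc, hycard⟩
    · subst hy1
      rw [mul_one] at hcon
      exact hfixfree x hxcard hcon
    · obtain ⟨Lx, hLxprod, hLxlen, hLxmem, hLxreach⟩ := cycle_dec hxc
      obtain ⟨Ly, hLyprod, hLylen, hLymem, hLyreach⟩ := cycle_dec hyc
      set L := Lx ++ Ly ++ Lg.reverse with hL
      have hLprod : prodSwaps L = 1 := by
        rw [hL, prodSwaps_append, prodSwaps_append, prodSwaps_reverse, hLxprod, hLyprod,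
          ← hg, ← hcon]
        simp
      have hwint : ∃ w, w ∈ x.support ∧ w ∈ y.support := by
        have hcard := Finset.card_inter_add_card_union x.support y.support
        have hu : (x.support ∪ y.support).card ≤ n := by
          calc (x.support ∪ y.support).card ≤ Fintype.card (Fin n) := Finset.card_le_univ _
            _ = n := Fintype.card_fin n
        have hpos : 0 < (x.support ∩ y.support).card := by omega
        obtain ⟨w, hw⟩ := Finset.card_pos.1 hpos
        exact ⟨w, Finset.mem_inter.1 hw⟩
      obtain ⟨w, hwx, hwy⟩ := hwint
      have hreachw : ∀ v : Fin n, Reach L v w := by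
        intro v
        rcases hmoves v with hv | hv
        · exact (hLxreach v hv w hwx).mono (fun e he => by rw [hL]; simp [he])
        · exact (hLyreach v hv w hwy).mono (fun e he => by rw [hL]; simp [he])
      have hcomp : ncomp L = 1 := by
        haveI : Nonempty (Fin n) := ⟨⟨0, hn0⟩⟩
        exact nclasses_eq_one (fun u v => ((hreachw u).trans (hreachw v).symm))
      have hkey := key_ineq L
      have hcyc1 : ncyc (1 : Equiv.Perm (Fin n)) = Nat.card (Fin n) :=
        nclasses_eq_card (fun a b => Equiv.Perm.sameCycle_one)
      rw [hLprod, hcomp, hcyc1, Nat.card_eq_fintype_card, Fintype.card_fin] at hkey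
      have hlen : L.length = Lx.length + Ly.length + Lg.length := by
        rw [hL]; simp; try omega
      rw [hlen, hglen] at hkey
      rw [hxcard] at hLxlen
      rw [hycard] at hLylen
      omega

end Main
end

section
/- Let p be an odd prime and g ∈ A_n a permutation all of whose nontrivial cycles have length < p, with |supp(g)| ≥ p and |supp(g)| + c*(g) ≤ 2p and n ≥ p. Then g is a product of two p-cycles in A_n. -/
open Equiv List

variable {α : Type*} [DecidableEq α]

theorem formPerm_append_cons (xs : List α) (x : α) (ys : List α) :
    List.formPerm (xs ++ x :: ys) = List.formPerm (xs ++ [x]) * List.formPerm (x :: ys) := by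
  induction xs with
  | nil => simp
  | cons a t ih =>
    cases t with
    | nil => simp [formPerm_cons_cons]
    | cons b t' =>
      show List.formPerm (a :: b :: (t' ++ x :: ys)) = List.formPerm (a :: b :: (t' ++ [x])) * _
      rw [formPerm_cons_cons a b, formPerm_cons_cons a b]
      rw [show b :: (t' ++ x :: ys) = (b :: t') ++ x :: ys from rfl, ih, mul_assoc]
      rfl

theorem formPerm_base (l : List α) (a : ℕ) (ha1 : 1 ≤ a) (ha2 : a ≤ l.length) :
    List.formPerm (l.take a) * List.formPerm (l.drop (a-1)) = List.formPerm l := by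
  have hv : a - 1 < l.length := by omega
  have htake : l.take a = l.take (a-1) ++ [l[a-1]] := by
    have := List.take_concat_get hv
    rw [show a - 1 + 1 = a by omega, List.concat_eq_append] at this
    exact this.symm
  have hdrop : l.drop (a-1) = l[a-1] :: l.drop a := by
    have := List.drop_eq_getElem_cons hv
    rw [show a - 1 + 1 = a by omega] at this
    exact this
  have hl : l = l.take (a-1) ++ l[a-1] :: l.drop a := by
    conv_lhs => rw [← List.take_append_drop (a-1) l]
    rw [hdrop]
  rw [htake, hdrop, ← formPerm_append_cons, ← hl]

theorem formPerm_cut (u : α) (l : List α) (a : ℕ) (ha1 : 1 ≤ a) (ha2 : a ≤ l.length)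
    (hnd : (u :: l).Nodup) :
    List.formPerm (u :: l.take a) * List.formPerm (l.drop (a-1) ++ [u]) = List.formPerm l := by
  have hv : a - 1 < l.length := by omega
  set v := l[a-1] with hvdef
  have htake : l.take a = l.take (a-1) ++ [v] := by
    have := List.take_concat_get hv
    rw [show a - 1 + 1 = a by omega, List.concat_eq_append] at this
    exact this.symm
  have hdrop : l.drop (a-1) = v :: l.drop a := by
    have := List.drop_eq_getElem_cons hv
    rw [show a - 1 + 1 = a by omega] at this
    exact this
  have hl : l = l.take (a-1) ++ v :: l.drop a := by
    conv_lhs => rw [← List.take_append_drop (a-1) l]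
    rw [hdrop]
  have hndl : l.Nodup := hnd.of_cons
  have hnu : u ∉ l := by
    have := hnd; rw [List.nodup_cons] at this; exact this.1
  have hXnd : (u :: l.take a).Nodup := by
    rw [List.nodup_cons]
    exact ⟨fun h => hnu ((l.take_sublist a).mem h), hndl.sublist (l.take_sublist a)⟩
  have hA : List.formPerm (u :: l.take a) = List.formPerm (l.take a ++ [u]) := by
    rw [← List.formPerm_rotate_one _ hXnd, List.rotate_cons_succ, List.rotate_zero]
  have hYnd : (u :: l.drop (a-1)).Nodup := by
    rw [List.nodup_cons]
    exact ⟨fun h => hnu ((l.drop_sublist _).mem h), hndl.sublist (l.drop_sublist _)⟩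
  have hB : List.formPerm (l.drop (a-1) ++ [u]) = List.formPerm (u :: l.drop (a-1)) := by
    rw [← List.formPerm_rotate_one _ hYnd, List.rotate_cons_succ, List.rotate_zero]
  rw [hA, hB, htake, hdrop]
  rw [show l.take (a-1) ++ [v] ++ [u] = l.take (a-1) ++ v :: [u] from by simp]
  rw [formPerm_append_cons, formPerm_cons_cons u v]
  rw [List.formPerm_pair]
  calc List.formPerm (l.take (a-1) ++ [v]) * Equiv.swap v u *
        (Equiv.swap u v * List.formPerm (v :: l.drop a))
      = List.formPerm (l.take (a-1) ++ [v]) * (Equiv.swap v u * Equiv.swap u v) *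
        List.formPerm (v :: l.drop a) := by group
    _ = List.formPerm (l.take (a-1) ++ [v]) * List.formPerm (v :: l.drop a) := by
        rw [Equiv.swap_comm v u, Equiv.swap_mul_self, mul_one]
    _ = List.formPerm l := by rw [← formPerm_append_cons, ← hl]

/-- the A-side list of a chain decomposition -/
def laOf (ps : List (List α × ℕ)) : List α := (ps.map fun q => q.1.take q.2).flatten

/-- the B-side list of a chain decomposition -/
def lbOf (ps : List (List α × ℕ)) : List α :=
  (ps.reverse.map fun q => q.1.drop (q.2 - 1)).flatten

theorem chain_spec (ps : List (List α × ℕ)) (hne : ps ≠ [])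
    (hq : ∀ q ∈ ps, q.1 ≠ [] ∧ 1 ≤ q.2 ∧ q.2 ≤ q.1.length)
    (hnd : ((ps.map Prod.fst).flatten).Nodup) :
    List.formPerm (laOf ps) * List.formPerm (lbOf ps)
        = (ps.map fun q => List.formPerm q.1).prod
      ∧ laOf ps ≠ [] ∧ lbOf ps ≠ []
      ∧ (laOf ps).getLast? = (lbOf ps).head?
      ∧ (∀ x ∈ laOf ps, x ∈ (ps.map Prod.fst).flatten)
      ∧ (∀ x ∈ lbOf ps, x ∈ (ps.map Prod.fst).flatten) := by
  induction ps using List.reverseRecOn with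
  | nil => exact absurd rfl hne
  | append_singleton init q ih =>
    obtain ⟨hq1, hq2, hq3⟩ := hq q (by simp)
    have hlen : 1 ≤ q.1.length := List.length_pos_iff.mpr hq1
    have hPne : q.1.take q.2 ≠ [] := by
      apply List.ne_nil_of_length_pos; rw [List.length_take]; omega
    have hQne : q.1.drop (q.2 - 1) ≠ [] := by
      apply List.ne_nil_of_length_pos; rw [List.length_drop]; omega
    have hv : q.2 - 1 < q.1.length := by omega
    have hlastP : (q.1.take q.2).getLast? = some q.1[q.2-1] := by
      have h1 : q.1.take q.2 = q.1.take (q.2-1) ++ [q.1[q.2-1]] := by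
        have := List.take_concat_get hv
        rw [show q.2 - 1 + 1 = q.2 by omega, List.concat_eq_append] at this
        exact this.symm
      rw [h1, List.getLast?_append_of_ne_nil _ (by simp), List.getLast?_singleton]
    have hheadQ : (q.1.drop (q.2 - 1)).head? = some q.1[q.2-1] := by
      have h2 : q.1.drop (q.2-1) = q.1[q.2-1] :: q.1.drop q.2 := by
        have := List.drop_eq_getElem_cons hv
        rw [show q.2 - 1 + 1 = q.2 by omega] at this
        exact this
      rw [h2, List.head?_cons]
    rcases eq_or_ne init [] with hinit | hinit
    · subst hinit
      refine ⟨?_, ?_, ?_, ?_, ?_, ?_⟩ <;>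
        simp only [laOf, lbOf, List.nil_append, List.map_cons, List.map_nil,
          List.flatten, List.append_eq, List.append_nil, List.reverse_singleton, List.prod_cons,
          List.prod_nil, mul_one]
      · exact formPerm_base q.1 q.2 hq2 hq3
      · exact hPne
      · exact hQne
      · rw [hlastP, hheadQ]
      · intro x hx; exact (q.1.take_sublist q.2).mem hx
      · intro x hx; exact (q.1.drop_sublist _).mem hx
    · -- step case
      have hndinit : ((init.map Prod.fst).flatten).Nodup := by
        refine List.Nodup.sublist ?_ hnd
        rw [List.map_append, List.flatten_append]
        exact List.sublist_append_left _ _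
      obtain ⟨hprod, hlane, hlbne, hjunc, hlamem, hlbmem⟩ :=
        ih hinit (fun r hr => hq r (by simp [hr])) hndinit
      have hlaeq : laOf (init ++ [q]) = laOf init ++ q.1.take q.2 := by
        simp [laOf]
      have hlbeq : lbOf (init ++ [q]) = q.1.drop (q.2 - 1) ++ lbOf init := by
        simp [lbOf]
      -- junction point u
      set u := (laOf init).getLast hlane with hu
      have hlast : (laOf init).getLast? = some u := List.getLast?_eq_getLast hlane
      have hhead : (lbOf init).head? = some u := by rw [← hjunc, hlast]
      have hlbdecomp : lbOf init = u :: (lbOf init).tail := by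
        conv_lhs => rw [← List.cons_head_tail hlbne]
        congr 1
        have := List.head?_eq_head (l := lbOf init) hlbne
        rw [hhead] at this
        exact (Option.some_injective _ this).symm
      have hladecomp : laOf init = (laOf init).dropLast ++ [u] :=
        (List.dropLast_append_getLast hlane).symm
      -- disjointness of q.1 from init flatten
      have hdisj : ∀ x ∈ q.1, x ∉ (init.map Prod.fst).flatten := by
        intro x hx hx'
        rw [List.map_append, List.flatten_append] at hnd
        have := List.disjoint_of_nodup_append hnd
        exact (this hx' (by simp [hx]))
      have humem : u ∈ (init.map Prod.fst).flatten := hlamem u (by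
        rw [hladecomp]; simp)
      have hndul : (u :: q.1).Nodup := by
        rw [List.nodup_cons]
        constructor
        · exact fun h => hdisj u h humem
        · have : q.1.Sublist ((init ++ [q]).map Prod.fst).flatten := by
            rw [List.map_append, List.flatten_append]
            apply List.sublist_append_of_sublist_right
            simp
          exact hnd.sublist this
      -- main computation
      constructor
      · rw [hlaeq, hlbeq, hladecomp, hlbdecomp]
        rw [show (laOf init).dropLast ++ [u] ++ q.1.take q.2
              = (laOf init).dropLast ++ u :: q.1.take q.2 from by simp]
        rw [formPerm_append_cons ((laOf init).dropLast) u (q.1.take q.2),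
          formPerm_append_cons (q.1.drop (q.2-1)) u ((lbOf init).tail)]
        rw [← hladecomp, ← hlbdecomp]
        have hcut := formPerm_cut u q.1 q.2 hq2 hq3 hndul
        have hcomm : Commute (List.formPerm q.1) (List.formPerm (lbOf init)) := by
          apply Equiv.Perm.Disjoint.commute
          intro x
          by_contra hcon
          push_neg at hcon
          obtain ⟨h1, h2⟩ := hcon
          exact hdisj x (List.mem_of_formPerm_apply_ne h1)
            (hlbmem x (List.mem_of_formPerm_apply_ne h2))
        calc List.formPerm (laOf init) * List.formPerm (u :: q.1.take q.2) *
              (List.formPerm (q.1.drop (q.2-1) ++ [u]) * List.formPerm (lbOf init))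
            = List.formPerm (laOf init) * (List.formPerm (u :: q.1.take q.2) *
              List.formPerm (q.1.drop (q.2-1) ++ [u])) * List.formPerm (lbOf init) := by group
          _ = List.formPerm (laOf init) * List.formPerm q.1 * List.formPerm (lbOf init) := by
              rw [hcut]
          _ = List.formPerm (laOf init) * List.formPerm (lbOf init) * List.formPerm q.1 := by
              rw [mul_assoc, hcomm.eq, mul_assoc]
          _ = ((init ++ [q]).map fun q => List.formPerm q.1).prod := by
              rw [hprod, List.map_append, List.prod_append]; simp
      refine ⟨?_, ?_, ?_, ?_, ?_⟩
      · rw [hlaeq]; simp [hlane]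
      · rw [hlbeq]; simp [hQne]
      · rw [hlaeq, hlbeq, List.getLast?_append_of_ne_nil _ hPne,
          List.head?_append_of_ne_nil _ hQne, hlastP, hheadQ]
      · intro x hx
        rw [hlaeq, List.mem_append] at hx
        rw [List.map_append, List.flatten_append, List.mem_append]
        rcases hx with hx | hx
        · exact Or.inl (hlamem x hx)
        · exact Or.inr (by simpa using (q.1.take_sublist q.2).mem hx)
      · intro x hx
        rw [hlbeq, List.mem_append] at hx
        rw [List.map_append, List.flatten_append, List.mem_append]
        rcases hx with hx | hx
        · exact Or.inr (by simpa using (q.1.drop_sublist _).mem hx)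
        · exact Or.inl (hlbmem x hx)

theorem flatten_sublist_flatten {L M : List (List α)} (h : List.Forall₂ List.Sublist L M) :
    L.flatten.Sublist M.flatten := by
  induction h with
  | nil => simp
  | cons h _ ih => simpa using h.append ih
theorem grow_step [Fintype α] (p : ℕ) (hcard : p ≤ Fintype.card α) (g : Equiv.Perm α) :
    ∀ d : ℕ, ∀ la lb : List α, la.Nodup → lb.Nodup → la.length = lb.length →
    1 ≤ la.length → la.length ≤ p → p - la.length = d →
    List.formPerm la * List.formPerm lb = g →
    ∃ la' lb' : List α, la'.Nodup ∧ lb'.Nodup ∧ la'.length = p ∧ lb'.length = p ∧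
      List.formPerm la' * List.formPerm lb' = g := by
  intro d
  induction d with
  | zero =>
    intro la lb h1 h2 h3 h4 h5 h6 h7
    exact ⟨la, lb, h1, h2, by omega, by omega, h7⟩
  | succ d ih =>
    intro la lb h1 h2 h3 h4 h5 h6 h7
    have hlt : la.length < p := by omega
    have hlane : la ≠ [] := by
      intro h; rw [h] at h4; simp at h4
    have hcards : la.toFinset.card = lb.toFinset.card := by
      rw [List.toFinset_card_of_nodup h1, List.toFinset_card_of_nodup h2, h3]
    by_cases hset : la.toFinset = lb.toFinset
    · -- same support: add a fresh point to both
      have hzex : ∃ z, z ∉ la.toFinset := by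
        by_contra hcon
        push_neg at hcon
        have : la.toFinset = Finset.univ := Finset.eq_univ_iff_forall.mpr hcon
        have := Finset.card_univ (α := α) ▸ this ▸ List.toFinset_card_of_nodup h1
        omega
      obtain ⟨z, hz⟩ := hzex
      have hzla : z ∉ la := fun h => hz (List.mem_toFinset.mpr h)
      have hzlb : z ∉ lb := fun h => hz (hset ▸ List.mem_toFinset.mpr h)
      set u := la.getLast hlane with hudef
      have hula : u ∈ la := List.getLast_mem hlane
      have hulb : u ∈ lb := by
        have := List.mem_toFinset.mpr hula
        rw [hset] at this
        exact List.mem_toFinset.mp this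
      obtain ⟨l₁, l₂, hlb⟩ := List.append_of_mem hulb
      have hrot : lb.rotate l₁.length = u :: (l₂ ++ l₁) := by
        rw [List.rotate_eq_drop_append_take (by rw [hlb]; simp; try omega), hlb,
          List.drop_left' (by rfl), List.take_left' (by rfl)]
        simp
      have hrotperm : (lb.rotate l₁.length).Perm lb := List.rotate_perm lb l₁.length
      have hfrot : List.formPerm (u :: (l₂ ++ l₁)) = List.formPerm lb := by
        rw [← hrot]; exact List.formPerm_rotate lb h2 l₁.length
      refine ih (la ++ [z]) (z :: u :: (l₂ ++ l₁)) ?_ ?_ ?_ ?_ ?_ (by simp; omega) ?_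
      · exact List.Nodup.append h1 (List.nodup_singleton z)
          (by simp [List.disjoint_singleton]; exact hzla)
      · rw [List.nodup_cons]
        refine ⟨?_, ?_⟩
        · intro h
          have : z ∈ lb := hrotperm.mem_iff.mp (hrot ▸ h)
          exact hzlb this
        · rw [← hrot]; exact List.nodup_rotate.mpr h2
      · have : lb.length = (u :: (l₂ ++ l₁)).length := by
          rw [← hrot, List.length_rotate]
        simp at this ⊢
        omega
      · simp
      · simp; omega
      · -- product
        have hla2 : la = la.dropLast ++ [u] := (List.dropLast_append_getLast hlane).symm
        have e1 : List.formPerm (la ++ [z]) = List.formPerm la * Equiv.swap u z := by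
          conv_lhs => rw [hla2]
          rw [show la.dropLast ++ [u] ++ [z] = la.dropLast ++ u :: [z] from by simp]
          rw [formPerm_append_cons, List.formPerm_pair, ← hla2]
        have e2 : List.formPerm (z :: u :: (l₂ ++ l₁))
            = Equiv.swap z u * List.formPerm lb := by
          rw [List.formPerm_cons_cons, hfrot]
        rw [e1, e2, mul_assoc, ← mul_assoc (Equiv.swap u z), Equiv.swap_comm z u,
          Equiv.swap_mul_self, one_mul, h7]
    · -- different supports: trade points
      have hsub1 : ¬ la.toFinset ⊆ lb.toFinset := fun hs =>
        hset (Finset.eq_of_subset_of_card_le hs (le_of_eq hcards.symm))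
      have hsub2 : ¬ lb.toFinset ⊆ la.toFinset := fun hs => by
        exact hset (Finset.eq_of_subset_of_card_le hs (le_of_eq hcards)).symm
      obtain ⟨u, hu1, hu2⟩ := Finset.not_subset.mp hsub1
      obtain ⟨z, hz1, hz2⟩ := Finset.not_subset.mp hsub2
      have hula : u ∈ la := List.mem_toFinset.mp hu1
      have hulb : u ∉ lb := fun h => hu2 (List.mem_toFinset.mpr h)
      have hzlb : z ∈ lb := List.mem_toFinset.mp hz1
      have hzla : z ∉ la := fun h => hz2 (List.mem_toFinset.mpr h)
      obtain ⟨m₁, m₂, hla⟩ := List.append_of_mem hula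
      obtain ⟨k₁, k₂, hlb⟩ := List.append_of_mem hzlb
      have hrota : la.rotate (m₁.length + 1) = m₂ ++ (m₁ ++ [u]) := by
        have h' : la = (m₁ ++ [u]) ++ m₂ := by rw [hla]; simp
        rw [List.rotate_eq_drop_append_take (by rw [h']; simp; try omega), h',
          List.drop_left' (by simp), List.take_left' (by simp)]
      have hfrota : List.formPerm (m₂ ++ (m₁ ++ [u])) = List.formPerm la := by
        rw [← hrota]; exact List.formPerm_rotate la h1 _
      have hrotb : lb.rotate k₁.length = z :: (k₂ ++ k₁) := by
        rw [List.rotate_eq_drop_append_take (by rw [hlb]; simp; try omega), hlb,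
          List.drop_left' (by rfl), List.take_left' (by rfl)]
        simp
      have hfrotb : List.formPerm (z :: (k₂ ++ k₁)) = List.formPerm lb := by
        rw [← hrotb]; exact List.formPerm_rotate lb h2 _
      have hrotaperm : (la.rotate (m₁.length + 1)).Perm la := List.rotate_perm _ _
      have hrotbperm : (lb.rotate k₁.length).Perm lb := List.rotate_perm _ _
      refine ih (m₂ ++ (m₁ ++ [u]) ++ [z]) (u :: z :: (k₂ ++ k₁)) ?_ ?_ ?_ ?_ ?_ ?_ ?_
      · apply List.Nodup.append
        · rw [← hrota]; exact List.nodup_rotate.mpr h1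
        · exact List.nodup_singleton z
        · simp [List.disjoint_singleton]
          exact ⟨fun h => hzla (by rw [hla]; simp [h]), fun h => hzla (by rw [hla]; simp [h]),
            fun h => hzla (by rw [hla]; simp [h])⟩
      · rw [List.nodup_cons]
        constructor
        · intro h
          exact hulb (hrotbperm.mem_iff.mp (hrotb ▸ h))
        · rw [← hrotb]; exact List.nodup_rotate.mpr h2
      · have e1 : la.length = m₁.length + 1 + m₂.length := by rw [hla]; simp; try omega
        have e2 : lb.length = k₁.length + 1 + k₂.length := by rw [hlb]; simp; try omega
        simp
        omega
      · simp
        omega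
      · have e1 : la.length = m₁.length + 1 + m₂.length := by rw [hla]; simp; try omega
        simp
        omega
      · have e1 : la.length = m₁.length + 1 + m₂.length := by rw [hla]; simp; try omega
        simp
        omega
      · have e1 : List.formPerm (m₂ ++ (m₁ ++ [u]) ++ [z])
            = List.formPerm la * Equiv.swap u z := by
          rw [show m₂ ++ (m₁ ++ [u]) ++ [z] = (m₂ ++ m₁) ++ u :: [z] from by simp]
          rw [formPerm_append_cons, List.formPerm_pair]
          rw [show (m₂ ++ m₁) ++ [u] = m₂ ++ (m₁ ++ [u]) from by simp, hfrota]
        have e2 : List.formPerm (u :: z :: (k₂ ++ k₁))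
            = Equiv.swap u z * List.formPerm lb := by
          rw [List.formPerm_cons_cons, hfrotb]
        rw [e1, e2, mul_assoc, ← mul_assoc (Equiv.swap u z), Equiv.swap_mul_self,
          one_mul, h7]

/-- greedy choice of cut positions -/
def cutsL : ℕ → List (List α) → List ℕ
  | _, [] => []
  | m, l :: rest =>
    min l.length (m - rest.length) :: cutsL (m - min l.length (m - rest.length)) rest

theorem length_le_sum_lengths (ll : List (List α)) (h : ∀ l ∈ ll, l ≠ []) :
    ll.length ≤ (ll.map List.length).sum := by
  induction ll with
  | nil => simp
  | cons l rest ih =>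
    have h1 : 1 ≤ l.length := List.length_pos_iff.mpr (h l (by simp))
    have := ih (fun l' hl' => h l' (by simp [hl']))
    simp only [List.map_cons, List.sum_cons, List.length_cons]
    omega

theorem cutsL_spec (ll : List (List α)) (m : ℕ) (h1 : ∀ l ∈ ll, l ≠ [])
    (h2 : ll.length ≤ m) (h3 : m ≤ (ll.map List.length).sum) :
    (cutsL m ll).length = ll.length ∧
    (∀ q ∈ ll.zip (cutsL m ll), q.1 ≠ [] ∧ 1 ≤ q.2 ∧ q.2 ≤ q.1.length) ∧
    ((ll.zip (cutsL m ll)).map Prod.snd).sum = m ∧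
    ((ll.zip (cutsL m ll)).map (fun q => q.1.length + 1 - q.2)).sum
      = (ll.map List.length).sum + ll.length - m := by
  induction ll generalizing m with
  | nil =>
    simp only [List.map_nil, List.sum_nil, Nat.le_zero] at h3
    subst h3
    simp [cutsL]
  | cons l rest ih =>
    have hl1 : 1 ≤ l.length := List.length_pos_iff.mpr (h1 l (by simp))
    have hrest1 : ∀ l' ∈ rest, l' ≠ [] := fun l' hl' => h1 l' (by simp [hl'])
    have hrestlen : rest.length ≤ (rest.map List.length).sum := length_le_sum_lengths rest hrest1
    set a := min l.length (m - rest.length) with ha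
    have hllen : (l :: rest).length = rest.length + 1 := by simp
    rw [hllen] at h2
    have hsum : ((l :: rest).map List.length).sum = l.length + (rest.map List.length).sum := by
      simp
    rw [hsum] at h3
    have ha1 : 1 ≤ a := by omega
    have ha2 : a ≤ l.length := min_le_left _ _
    have hm2 : rest.length ≤ m - a := by omega
    have hm3 : m - a ≤ (rest.map List.length).sum := by omega
    obtain ⟨ih1, ih2, ih3, ih4⟩ := ih (m - a) hrest1 hm2 hm3
    have hcuts : cutsL m (l :: rest) = a :: cutsL (m - a) rest := rfl
    have hzip : (l :: rest).zip (cutsL m (l :: rest)) = (l, a) :: rest.zip (cutsL (m - a) rest) := by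
      rw [hcuts]; rfl
    refine ⟨?_, ?_, ?_, ?_⟩
    · rw [hcuts]; simp [ih1]
    · rw [hzip]
      intro q hq
      rcases List.mem_cons.mp hq with hq | hq
      · subst hq; exact ⟨h1 l (by simp), ha1, ha2⟩
      · exact ih2 q hq
    · rw [hzip]; simp only [List.map_cons, List.sum_cons, ih3]; omega
    · rw [hzip]; simp only [List.map_cons, List.sum_cons, ih4, hsum, hllen]; omega

theorem laOf_length (ps : List (List α × ℕ)) (h : ∀ q ∈ ps, q.2 ≤ q.1.length) :
    (laOf ps).length = (ps.map Prod.snd).sum := by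
  induction ps with
  | nil => simp [laOf]
  | cons q rest ih =>
    have : (laOf (q :: rest)) = q.1.take q.2 ++ laOf rest := by simp [laOf]
    rw [this, List.length_append, List.length_take, ih (fun r hr => h r (by simp [hr]))]
    have := h q (by simp)
    simp only [List.map_cons, List.sum_cons]
    omega

theorem lbOf_length (ps : List (List α × ℕ)) :
    (lbOf ps).length = (ps.map (fun q => q.1.length - (q.2 - 1))).sum := by
  induction ps with
  | nil => simp [lbOf]
  | cons q rest ih =>
    have : (lbOf (q :: rest)) = lbOf rest ++ q.1.drop (q.2 - 1) := by
      simp [lbOf]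
    rw [this, List.length_append, List.length_drop, ih]
    simp only [List.map_cons, List.sum_cons]
    omega

theorem laOf_sublist (ps : List (List α × ℕ)) :
    (laOf ps).Sublist ((ps.map Prod.fst).flatten) := by
  induction ps with
  | nil => simp [laOf]
  | cons q rest ih =>
    have h1 : (laOf (q :: rest)) = q.1.take q.2 ++ laOf rest := by simp [laOf]
    have h2 : ((q :: rest).map Prod.fst).flatten = q.1 ++ (rest.map Prod.fst).flatten := by simp
    rw [h1, h2]
    exact (q.1.take_sublist q.2).append ih

theorem lbOf_sublist (ps : List (List α × ℕ)) :
    (lbOf ps).Sublist ((ps.reverse.map Prod.fst).flatten) := by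
  induction ps with
  | nil => simp [lbOf]
  | cons q rest ih =>
    have h1 : (lbOf (q :: rest)) = lbOf rest ++ q.1.drop (q.2 - 1) := by simp [lbOf]
    have h2 : ((q :: rest).reverse.map Prod.fst).flatten
        = (rest.reverse.map Prod.fst).flatten ++ q.1 := by simp
    rw [h1, h2]
    exact ih.append (q.1.drop_sublist _)



/-- If all nontrivial cycles of `g ∈ A_n` have length `< p`, with
`|supp g| ≥ p` and `|supp g| + c*(g) ≤ 2p`, then `g` is a product of two `p`-cycles. -/
theorem small_cycles_two_p_cycles (p n : ℕ) (hp : p.Prime) (hodd : Odd p)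
    (hn : p ≤ n) (g : Equiv.Perm (Fin n)) (hg : g ∈ alternatingGroup (Fin n))
    (hcyc : ∀ c ∈ g.cycleType, c < p) (hsupp : p ≤ g.support.card)
    (hsum : g.support.card + g.cycleType.card ≤ 2 * p) :
    ∃ A B : Equiv.Perm (Fin n), A.IsCycle ∧ A.support.card = p ∧
      B.IsCycle ∧ B.support.card = p ∧ g = A * B := by
  classical
  set s := g.support.card with hs
  set k := g.cycleType.card with hkdef
  have hn0 : 0 < n := lt_of_lt_of_le hp.pos hn
  set F := g.cycleFactorsFinset.toList with hF
  have hFmem : ∀ c ∈ F, c ∈ g.cycleFactorsFinset := fun c hc => Finset.mem_toList.mp hc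
  have hcycF : ∀ c ∈ F, c.IsCycle := fun c hc =>
    (Equiv.Perm.mem_cycleFactorsFinset_iff.mp (hFmem c hc)).1
  -- base point of each cycle
  set pt : Equiv.Perm (Fin n) → Fin n :=
    fun c => if h : c.support.Nonempty then c.support.min' h else ⟨0, hn0⟩ with hptdef
  have hptmem : ∀ c ∈ F, pt c ∈ c.support := by
    intro c hc
    have hne : c.support.Nonempty :=
      Finset.card_pos.mp (lt_of_lt_of_le (by norm_num) (hcycF c hc).two_le_card_support)
    simp only [hptdef, dif_pos hne]
    exact c.support.min'_mem hne
  set ll := F.map (fun c => c.toList (pt c)) with hlldef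
  -- pointwise facts
  have htlen : ∀ c ∈ F, (c.toList (pt c)).length = c.support.card := by
    intro c hc
    rw [Equiv.Perm.length_toList, (hcycF c hc).cycleOf_eq
      (Equiv.Perm.mem_support.mp (hptmem c hc))]
  have htform : ∀ c ∈ F, List.formPerm (c.toList (pt c)) = c := by
    intro c hc
    rw [Equiv.Perm.formPerm_toList, (hcycF c hc).cycleOf_eq
      (Equiv.Perm.mem_support.mp (hptmem c hc))]
  have htmem : ∀ c ∈ F, ∀ x ∈ c.toList (pt c), x ∈ c.support := by
    intro c hc x hx
    obtain ⟨hsc, hmem⟩ := Equiv.Perm.mem_toList_iff.mp hx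
    exact (hsc.mem_support_iff).mp (hptmem c hc)
  -- nodup of the flatten
  have hndF : F.Nodup := Finset.nodup_toList _
  have hpairF : F.Pairwise (fun c c' => _root_.Disjoint c.support c'.support) := by
    refine hndF.imp_of_mem ?_
    intro a b ha hb hne
    exact ((Equiv.Perm.cycleFactorsFinset_pairwise_disjoint g)
      (hFmem a ha) (hFmem b hb) hne).disjoint_support
  have hndflat : (ll.flatten).Nodup := by
    rw [List.nodup_flatten]
    constructor
    · intro l hl
      rw [hlldef] at hl
      obtain ⟨c, hc, rfl⟩ := List.mem_map.mp hl
      exact Equiv.Perm.nodup_toList c (pt c)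
    · rw [hlldef, List.pairwise_map]
      refine hpairF.imp_of_mem ?_
      intro a b ha hb hd
      intro x hxa hxb
      exact Finset.disjoint_left.mp hd (htmem a ha x hxa) (htmem b hb x hxb)
  -- arithmetic facts
  have hsum_ll : (ll.map List.length).sum = s := by
    have e1 : ll.map List.length = F.map (fun c => c.support.card) := by
      rw [hlldef, List.map_map]
      exact List.map_congr_left (fun c hc => htlen c hc)
    rw [e1]
    have e2 : g.cycleType = (g.cycleFactorsFinset.val.map (Finset.card ∘ Equiv.Perm.support)) :=
      Equiv.Perm.cycleType_def g
    have e3 : g.cycleType.sum = s := Equiv.Perm.sum_cycleType g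
    rw [e2, ← Finset.coe_toList g.cycleFactorsFinset, Multiset.map_coe, Multiset.sum_coe] at e3
    rw [← e3, ← hF]
    try rfl
    try simp [Function.comp]
  have hkF : F.length = k := by
    rw [hkdef, Equiv.Perm.cycleType_def g, Multiset.card_map, hF]
    exact (Finset.length_toList _)
  have hk1 : 1 ≤ k := by
    by_contra hcon
    push_neg at hcon
    interval_cases k
    have : g.cycleType = 0 := Multiset.card_eq_zero.mp (by omega)
    have : s = 0 := by rw [hs, ← Equiv.Perm.sum_cycleType g, this]; simp
    have := hp.two_le
    omega
  have hs2k : 2 * k ≤ s := by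
    have h2 := Multiset.card_nsmul_le_sum (s := g.cycleType)
      (fun x hx => Equiv.Perm.two_le_of_mem_cycleType hx)
    rw [smul_eq_mul] at h2
    have h3 := Equiv.Perm.sum_cycleType g
    rw [hs, hkdef]
    omega
  have heven : Even (s + k) := by
    have hsign : Equiv.Perm.sign g = 1 := Equiv.Perm.mem_alternatingGroup.mp hg
    rw [Equiv.Perm.sign_of_cycleType] at hsign
    rcases Nat.even_or_odd (s + k) with he | ho
    · exact he
    · exfalso
      rw [hs, hkdef] at ho
      rw [← Equiv.Perm.sum_cycleType g] at ho
      rw [Odd.neg_one_pow ho] at hsign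
      exact absurd hsign (by decide)
  obtain ⟨m, hm⟩ := heven
  have hmk : k ≤ m := by omega
  have hmp : m ≤ p := by omega
  have hms : m ≤ s := by omega
  have hm1 : 1 ≤ m := by omega
  -- cuts
  have hll_ne : ∀ l ∈ ll, l ≠ [] := by
    intro l hl
    obtain ⟨c, hc, rfl⟩ := List.mem_map.mp hl
    intro hnil
    have := htlen c hc
    rw [hnil] at this
    have h2 := (hcycF c hc).two_le_card_support
    simp at this
    omega
  have hll_len : ll.length = k := by rw [hlldef, List.length_map, hkF]
  obtain ⟨hc1, hc2, hc3, hc4⟩ := cutsL_spec ll m hll_ne (by omega) (by omega)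
  set ps := ll.zip (cutsL m ll) with hpsdef
  have hps_fst : ps.map Prod.fst = ll := List.map_fst_zip (by omega)
  have hps_snd : ps.map Prod.snd = cutsL m ll := List.map_snd_zip (by omega)
  have hps_ne : ps ≠ [] := by
    intro hcon
    have : ps.length = 0 := by rw [hcon]; rfl
    rw [hpsdef, List.length_zip] at this
    omega
  -- apply the chain construction
  obtain ⟨hprod, hlane, hlbne, _, _, _⟩ := chain_spec ps hps_ne hc2 (by rw [hps_fst]; exact hndflat)
  -- the product equals g
  have hFprod : F.prod = g := by
    have hcomm' : (↑(F.toFinset) : Set (Equiv.Perm (Fin n))).Pairwise Commute := by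
      rw [hF, Finset.toList_toFinset]
      exact Equiv.Perm.cycleFactorsFinset_mem_commute g
    have e1 : F.toFinset.noncommProd id hcomm' = g := by
      calc F.toFinset.noncommProd id hcomm'
          = g.cycleFactorsFinset.noncommProd id
            (Equiv.Perm.cycleFactorsFinset_mem_commute g) :=
            Finset.noncommProd_congr (by rw [hF, Finset.toList_toFinset]) (fun x _ => rfl) _
        _ = g := Equiv.Perm.cycleFactorsFinset_noncommProd g
    rw [← e1, Finset.noncommProd_toFinset _ _ _ hndF]
    simp
  have hprodg : (ps.map fun q => List.formPerm q.1).prod = g := by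
    have e1 : (ps.map fun q => List.formPerm q.1) = ll.map List.formPerm := by
      rw [← hps_fst, List.map_map]
      rfl
    have e2 : ll.map List.formPerm = F := by
      calc ll.map List.formPerm
          = F.map (fun c => List.formPerm (c.toList (pt c))) := by
            rw [hlldef, List.map_map]
            rfl
        _ = F.map id := List.map_congr_left (fun c hc => htform c hc)
        _ = F := List.map_id F
    rw [e1, e2, hFprod]
  -- lengths of la, lb
  have hla_len : (laOf ps).length = m := by
    rw [laOf_length ps (fun q hq => (hc2 q hq).2.2)]
    exact hc3
  have hlb_len : (lbOf ps).length = m := by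
    rw [lbOf_length ps]
    have e1 : ps.map (fun q => q.1.length - (q.2 - 1))
        = ps.map (fun q => q.1.length + 1 - q.2) := by
      refine List.map_congr_left (fun q hq => ?_)
      obtain ⟨_, hq1, hq2⟩ := hc2 q hq
      omega
    rw [e1, hc4, hll_len, hsum_ll]
    omega
  -- nodups
  have hla_nd : (laOf ps).Nodup := by
    have h1 := laOf_sublist ps
    rw [hps_fst] at h1
    exact hndflat.sublist h1
  have hlb_nd : (lbOf ps).Nodup := by
    have h1 := lbOf_sublist ps
    have h2 : ((ps.reverse.map Prod.fst).flatten).Nodup := by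
      have e1 : ps.reverse.map Prod.fst = (ps.map Prod.fst).reverse := by
        rw [List.map_reverse]
      rw [e1, hps_fst]
      have h3 := (List.reverse_perm ll).flatten
      exact (h3.nodup_iff).mpr hndflat
    exact h2.sublist h1
  -- grow to length p
  have hcard : p ≤ Fintype.card (Fin n) := by rw [Fintype.card_fin]; exact hn
  obtain ⟨la', lb', hnd1, hnd2, hlen1, hlen2, hform⟩ :=
    grow_step p hcard g (p - m) (laOf ps) (lbOf ps) hla_nd hlb_nd
      (by rw [hla_len, hlb_len]) (by rw [hla_len]; omega) (by rw [hla_len]; omega)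
      (by rw [hla_len]) (hprod.trans hprodg)
  refine ⟨List.formPerm la', List.formPerm lb', ?_, ?_, ?_, ?_, hform.symm⟩
  · exact List.isCycle_formPerm hnd1 (by rw [hlen1]; exact hp.two_le)
  · rw [List.support_formPerm_of_nodup la' hnd1
      (fun x hx => by rw [hx] at hlen1; simp at hlen1; omega),
      List.toFinset_card_of_nodup hnd1, hlen1]
  · exact List.isCycle_formPerm hnd2 (by rw [hlen2]; exact hp.two_le)
  · rw [List.support_formPerm_of_nodup lb' hnd2
      (fun x hx => by rw [hx] at hlen2; simp at hlen2; omega),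
      List.toFinset_card_of_nodup hnd2, hlen2]
end

section
/- Let p be an odd prime and g = g₁⋯g_k a product of k ≥ 3 pairwise disjoint nontrivial cycles each of length < p, with |supp(g)| + c*(g) > 2p if g is even, or > 2p − 1 if g is odd. Then there exists a nonempty subcollection of the cycles whose product g' satisfies |supp(g')| ≥ p, and |supp(g')| + c*(g') ≤ 2p if g' is even, or ≤ 2p − 1 if g' is odd. -/
private lemma list_exists_min (l : List ℕ) (h : l ≠ []) : ∃ a ∈ l, ∀ b ∈ l, a ≤ b := by
  induction l with
  | nil => exact absurd rfl h
  | cons a t ih =>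
    rcases eq_or_ne t [] with rfl | ht
    · exact ⟨a, by simp⟩
    · obtain ⟨m, hm, hmin⟩ := ih ht
      rcases le_total a m with hle | hle
      · exact ⟨a, by simp, by
          intro b hb
          rcases List.mem_cons.1 hb with rfl | hb
          · exact le_rfl
          · exact hle.trans (hmin b hb)⟩
      · exact ⟨m, List.mem_cons_of_mem _ hm, by
          intro b hb
          rcases List.mem_cons.1 hb with rfl | hb
          · exact hle
          · exact hmin b hb⟩

/-- Combinatorial core: a list of naturals in `[2, p)` with sum `≥ p` has a
nonempty sublist with sum `≥ p` and sum + length `≤ 2p`. -/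
private lemma key_lemma (p : ℕ) (hp1 : 1 ≤ p) : ∀ (N : ℕ) (l : List ℕ), l.length ≤ N →
    (∀ a ∈ l, 2 ≤ a ∧ a < p) → p ≤ l.sum →
    ∃ s : List ℕ, s ≠ [] ∧ s.Sublist l ∧ p ≤ s.sum ∧ s.sum + s.length ≤ 2 * p := by
  intro N
  induction N with
  | zero =>
    intro l hl hmem hsum
    rw [Nat.le_zero, List.length_eq_zero_iff] at hl
    subst hl
    simp at hsum
    omega
  | succ N ih =>
    intro l hl hmem hsum
    by_cases hwhole : l.sum + l.length ≤ 2 * p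
    · refine ⟨l, ?_, List.Sublist.refl _, hsum, hwhole⟩
      intro h
      subst h
      simp at hsum
      omega
    · push_neg at hwhole
      have hne : l ≠ [] := by
        intro h; subst h; simp at hsum; omega
      obtain ⟨a, ha, hamin⟩ := list_exists_min l hne
      have ha2 : 2 ≤ a := (hmem a ha).1
      have hap : a < p := (hmem a ha).2
      have hka : l.length • a ≤ l.sum := List.card_nsmul_le_sum l a hamin
      rw [smul_eq_mul] at hka
      -- key claim: removing the minimum keeps the sum ≥ p
      have hclaim : p + a ≤ l.sum := by
        by_contra hcon
        push_neg at hcon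
        -- cast to integers and derive contradiction
        have h1 : (l.length : ℤ) * a ≤ l.sum := by exact_mod_cast hka
        have h2 : (l.sum : ℤ) < p + a := by exact_mod_cast hcon
        have h3 : (2 * p : ℤ) < l.sum + l.length := by exact_mod_cast hwhole
        have h4 : (a : ℤ) < p := by exact_mod_cast hap
        have h5 : (2 : ℤ) ≤ a := by exact_mod_cast ha2
        have h6 : (p : ℤ) ≤ l.sum := by exact_mod_cast hsum
        nlinarith [mul_nonneg (sub_nonneg.2 h6) (sub_nonneg.2 (by linarith : (l.sum : ℤ) ≤ 2 * p - 1)),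
          mul_le_mul_of_nonneg_right (by linarith : (2 * p + 1 - (l.sum : ℤ)) ≤ l.length)
            (by linarith : (0:ℤ) ≤ a)]
      have herase : a + (l.erase a).sum = l.sum := List.sum_erase ha
      have hlen : (l.erase a).length ≤ N := by
        have := List.length_erase_of_mem ha
        omega
      have hmem' : ∀ b ∈ l.erase a, 2 ≤ b ∧ b < p :=
        fun b hb => hmem b (List.mem_of_mem_erase hb)
      have hsum' : p ≤ (l.erase a).sum := by omega
      obtain ⟨s, hs1, hs2, hs3, hs4⟩ := ih (l.erase a) hlen hmem' hsum'
      exact ⟨s, hs1, hs2.trans l.erase_sublist, hs3, hs4⟩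

private lemma sign_eq_pow {n : ℕ} (M : List (Equiv.Perm (Fin n)))
    (hc : ∀ c ∈ M, c.IsCycle) (hd : M.Pairwise Equiv.Perm.Disjoint) :
    Equiv.Perm.sign M.prod =
      (-1 : ℤˣ) ^ ((M.map fun c => c.support.card).sum + M.length) ∧
    M.prod.support.card = (M.map fun c => c.support.card).sum ∧
    Multiset.card M.prod.cycleType = M.length := by
  have hct : M.prod.cycleType = ↑(M.map (Finset.card ∘ Equiv.Perm.support)) :=
    Equiv.Perm.cycleType_eq M rfl hc hd
  have hmap : M.map (Finset.card ∘ Equiv.Perm.support) = M.map fun c => c.support.card := rfl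
  have hsupp : M.prod.support.card = (M.map fun c => c.support.card).sum := by
    rw [← Equiv.Perm.sum_cycleType, hct, hmap, Multiset.sum_coe]
  have hcard : Multiset.card M.prod.cycleType = M.length := by
    rw [hct]; simp
  refine ⟨?_, hsupp, hcard⟩
  rw [Equiv.Perm.sign_of_cycleType, ← hsupp, Equiv.Perm.sum_cycleType, hsupp, hcard]

/-- If `g` is a product of `k ≥ 3` pairwise disjoint nontrivial cycles of
length `< p` with `|supp g| + c*(g) > 2p` (if `g` even) or `> 2p - 1` (if `g` odd),
then some nonempty subcollection of the cycles has product `g'` with `|supp g'| ≥ p`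
and `|supp g'| + c*(g') ≤ 2p` (if `g'` even) or `≤ 2p - 1` (if `g'` odd). -/
theorem exists_good_subelement (p n : ℕ) (hp : p.Prime) (hodd : Odd p)
    (L : List (Equiv.Perm (Fin n))) (hk : 3 ≤ L.length)
    (hcyc : ∀ c ∈ L, c.IsCycle ∧ c.support.card < p)
    (hdisj : L.Pairwise Equiv.Perm.Disjoint)
    (hbig : (Equiv.Perm.sign L.prod = 1 →
        2 * p < L.prod.support.card + L.prod.cycleType.card) ∧
      (Equiv.Perm.sign L.prod = -1 →
        2 * p - 1 < L.prod.support.card + L.prod.cycleType.card)) :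
    ∃ M : List (Equiv.Perm (Fin n)), M ≠ [] ∧ M.Sublist L ∧
      p ≤ M.prod.support.card ∧
      (Equiv.Perm.sign M.prod = 1 →
        M.prod.support.card + M.prod.cycleType.card ≤ 2 * p) ∧
      (Equiv.Perm.sign M.prod = -1 →
        M.prod.support.card + M.prod.cycleType.card ≤ 2 * p - 1) := by
  have hp2 : 2 ≤ p := hp.two_le
  obtain ⟨hsignL, hsuppL, hcardL⟩ :=
    sign_eq_pow L (fun c hc => (hcyc c hc).1) hdisj
  set l : List ℕ := L.map fun c => c.support.card with hldef
  -- the total weight is at least 2p + 1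
  have hF : 2 * p + 1 ≤ l.sum + L.length := by
    rcases Nat.even_or_odd (l.sum + L.length) with he | ho
    · have h1 : Equiv.Perm.sign L.prod = 1 := by rw [hsignL, he.neg_one_pow]
      have := hbig.1 h1
      omega
    · have h1 : Equiv.Perm.sign L.prod = -1 := by rw [hsignL, ho.neg_one_pow]
      have h2 := hbig.2 h1
      have h3 : l.sum + L.length ≠ 2 * p := by
        intro h; rw [h] at ho; exact (Nat.not_odd_iff_even.2 (even_two_mul p)) ho
      omega
  have hmem : ∀ a ∈ l, 2 ≤ a ∧ a < p := by
    intro a hal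
    obtain ⟨c, hcL, rfl⟩ := List.mem_map.1 hal
    exact ⟨(hcyc c hcL).1.two_le_card_support, (hcyc c hcL).2⟩
  have hlen : l.length = L.length := List.length_map _
  have h2len : 2 * l.length ≤ l.sum := by
    have := List.card_nsmul_le_sum l 2 (fun x hx => (hmem x hx).1)
    simpa [mul_comm] using this
  have hsum : p ≤ l.sum := by omega
  obtain ⟨s, hs0, hs1, hs2, hs3⟩ := key_lemma p (by omega) l.length l le_rfl hmem hsum
  obtain ⟨M, hML, hsM⟩ := List.sublist_map_iff.1 hs1
  have hMne : M ≠ [] := by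
    intro h; subst h; simp at hsM; exact hs0 hsM
  have hMcyc : ∀ c ∈ M, c.IsCycle := fun c hc => (hcyc c (hML.mem hc)).1
  have hMdisj : M.Pairwise Equiv.Perm.Disjoint := hdisj.sublist hML
  obtain ⟨hsignM, hsuppM, hcardM⟩ := sign_eq_pow M hMcyc hMdisj
  have hsum_eq : (M.map fun c => c.support.card).sum = s.sum := by rw [← hsM]
  have hlen_eq : M.length = s.length := by
    rw [← List.length_map (fun c : Equiv.Perm (Fin n) => c.support.card), ← hsM]
  rw [hsum_eq] at hsuppM
  refine ⟨M, hMne, hML, by omega, ?_, ?_⟩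
  · intro _
    omega
  · intro hsg
    have hodd' : Odd (s.sum + s.length) := by
      rcases Nat.even_or_odd (s.sum + s.length) with he | ho
      · exfalso
        rw [hsignM, hsum_eq, hlen_eq, he.neg_one_pow] at hsg
        exact absurd hsg (by decide)
      · exact ho
    have hne : s.sum + s.length ≠ 2 * p := by
      intro h; rw [h] at hodd'
      exact (Nat.not_odd_iff_even.2 (even_two_mul p)) hodd'
    omega
end

section
/- In S_n, for distinct letters 2, 3, 2̄, 3̄ and p−4 further distinct letters o_1,…,o_{p−4} (p ≥ 5 prime), the product of transpositions (2 3)(2̄ 3̄) equals the product of two p-cycles: (o_1 … o_{p−4} 3̄ 3 2̄ 2)(3 2̄ 2 3̄ o_{p−4} … o_1). -/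
open Equiv List

private lemma formPerm_map_perm {α : Type*} [DecidableEq α] (σ : Equiv.Perm α) :
    ∀ l : List α, (l.map σ).formPerm = σ * l.formPerm * σ⁻¹
  | [] => by simp
  | [a] => by simp
  | a :: b :: l => by
    calc ((a :: b :: l).map σ).formPerm
        = Equiv.swap (σ a) (σ b) * ((b :: l).map σ).formPerm := by simp
      _ = (σ * Equiv.swap a b * σ⁻¹) * (σ * (b :: l).formPerm * σ⁻¹) := by
          rw [Equiv.swap_apply_apply, formPerm_map_perm σ (b :: l)]
      _ = σ * (a :: b :: l).formPerm * σ⁻¹ := by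
          rw [List.formPerm_cons_cons]; group

private lemma formPerm_append_consec {α : Type*} [DecidableEq α]
    (l₁ l₂ : List α) (a b : α) (h : (l₁ ++ a :: b :: l₂).Nodup) :
    (l₁ ++ a :: b :: l₂).formPerm a = b := by
  have hlen : l₁.length < (l₁ ++ a :: b :: l₂).length := by simp
  have ha : (l₁ ++ a :: b :: l₂)[l₁.length] = a := by
    simp [List.getElem_append_right (Nat.le_refl _)]
  have hb : (l₁ ++ a :: b :: l₂)[l₁.length + 1]'(by simp) = b := by
    rw [List.getElem_append_right (by omega)]
    simp
  have key := List.formPerm_apply_getElem _ h l₁.length hlen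
  rw [ha] at key
  rw [key]
  have hmod : (l₁.length + 1) % (l₁ ++ a :: b :: l₂).length = l₁.length + 1 := by
    apply Nat.mod_eq_of_lt
    simp only [List.length_append, List.length_cons]
    omega
  simp_rw [hmod]
  exact hb

/-- The product of two disjoint transpositions `(2 3)(2̄ 3̄)` (composed left to
right) equals the product of the two `p`-cycles
`(o_1 … o_{p-4} 3̄ 3 2̄ 2)(3 2̄ 2 3̄ o_{p-4} … o_1)`. Multiplication below is
function composition, so the left-to-right product `a · b` is written `b * a`. -/
theorem two_transpositions_as_two_p_cycles {α : Type*} [DecidableEq α]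
    (p : ℕ) (hp : p.Prime) (hp5 : 5 ≤ p)
    (x2 x3 y2 y3 : α) (os : List α) (hos : os.length = p - 4)
    (hnd : (x2 :: x3 :: y2 :: y3 :: os).Nodup) :
    Equiv.swap y2 y3 * Equiv.swap x2 x3 =
      List.formPerm ([x3, y2, x2, y3] ++ os.reverse) *
        List.formPerm (os ++ [y3, x3, y2, x2]) := by
  simp only [List.nodup_cons, List.mem_cons] at hnd
  obtain ⟨h2, h3, hy2, hy3, hosnd⟩ := hnd
  push_neg at h2 h3 hy2
  obtain ⟨h23, h2y2, h2y3, h2os⟩ := h2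
  obtain ⟨h3y2, h3y3, h3os⟩ := h3
  obtain ⟨hy23, hy2os⟩ := hy2
  set s : Equiv.Perm α := Equiv.swap x2 x3 with hs
  set L : List α := os ++ [y3, x3, y2, x2] with hL
  have hLnd : L.Nodup := by
    rw [hL, List.nodup_append]
    refine ⟨hosnd, by simp [h23, h23.symm, h2y2, h2y2.symm, h2y3, h2y3.symm,
      h3y2, h3y2.symm, h3y3, h3y3.symm, hy23, hy23.symm], ?_⟩
    intro a ha
    simp only [List.mem_cons, List.not_mem_nil, or_false]
    rintro b (rfl | rfl | rfl | rfl) rfl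
    exacts [hy3 ha, h3os ha, hy2os ha, h2os ha]
  set c : Equiv.Perm α := L.formPerm with hc
  have hosmap : os.map s = os := by
    conv_rhs => rw [← List.map_id os]
    apply List.map_congr_left
    intro a ha
    exact Equiv.swap_apply_of_ne_of_ne (fun h => h2os (h ▸ ha)) (fun h => h3os (h ▸ ha))
  have hmap : ([x3, y2, x2, y3] ++ os.reverse) = L.reverse.map s := by
    rw [hL, List.reverse_append, List.map_append]
    congr 1
    · simp [hs, Equiv.swap_apply_of_ne_of_ne, Ne.symm h2y2, Ne.symm h3y2,
        Ne.symm h2y3, Ne.symm h3y3]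
    · rw [List.map_reverse, hosmap]
  have h1 : ([x3, y2, x2, y3] ++ os.reverse).formPerm = s * c⁻¹ * s := by
    rw [hmap, formPerm_map_perm, List.formPerm_reverse, hc, hs, Equiv.swap_inv]
  have hcy3 : c y3 = x3 := by
    rw [hc, hL]
    exact formPerm_append_consec os [y2, x2] y3 x3 hLnd
  have hcy2 : c y2 = x2 := by
    rw [hc, hL, show os ++ [y3, x3, y2, x2] = (os ++ [y3, x3]) ++ [y2, x2] by simp]
    exact formPerm_append_consec (os ++ [y3, x3]) [] y2 x2
      (by rw [← show os ++ [y3, x3, y2, x2] = (os ++ [y3, x3]) ++ [y2, x2] by simp]; exact hLnd)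
  have hinv3 : c⁻¹ x3 = y3 := by rw [← hcy3]; simp
  have hinv2 : c⁻¹ x2 = y2 := by rw [← hcy2]; simp
  have hconj : c⁻¹ * s * c = Equiv.swap y2 y3 := by
    rw [← hinv2, ← hinv3, Equiv.swap_apply_apply, inv_inv]
  have hdisj : (Equiv.swap y2 y3).Disjoint s := by
    intro z
    rcases eq_or_ne z y2 with rfl | hz2
    · right; exact Equiv.swap_apply_of_ne_of_ne (Ne.symm h2y2) (Ne.symm h3y2)
    rcases eq_or_ne z y3 with rfl | hz3
    · right; exact Equiv.swap_apply_of_ne_of_ne (Ne.symm h2y3) (Ne.symm h3y3)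
    · left; exact Equiv.swap_apply_of_ne_of_ne hz2 hz3
  have hrw : s * c⁻¹ * s * c = s * Equiv.swap y2 y3 := by rw [← hconj]; group
  rw [h1, hrw]
  exact hdisj.commute
end

section
/- Let p be an odd prime and let d₁, d₂ be two disjoint (p−1)-cycles in S_n. Then d₁d₂ is a product of two p-cycles A·B with supp(A), supp(B) ⊆ supp(d₁d₂) and |supp(A) ∩ supp(B)| = 2. -/
open Equiv Equiv.Perm Finset

lemma extend_cycle {α : Type*} [DecidableEq α] [Fintype α] {f : Equiv.Perm α}
    (hf : f.IsCycle) {a b : α} (ha : a ∈ f.support) (hb : b ∉ f.support) :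
    (Equiv.swap a b * f).IsCycle ∧ (Equiv.swap a b * f).support = insert b f.support := by
  have hab : a ≠ b := fun h => hb (h ▸ ha)
  have hfb : f b = b := Equiv.Perm.notMem_support.mp hb
  have hfa : f a ≠ a := Equiv.Perm.mem_support.mp ha
  set g := Equiv.swap a b * f with hg
  have gb : g b = a := by simp [hg, hfb]
  -- value on points of supp f
  have gval : ∀ x ∈ f.support, g x = if f x = a then b else f x := by
    intro x hx
    have hfx : f x ∈ f.support := Equiv.Perm.apply_mem_support.mpr hx
    by_cases h : f x = a
    · simp [hg, h]
    · have : f x ≠ b := fun hb' => hb (hb' ▸ hfx)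
      simp [hg, Equiv.swap_apply_of_ne_of_ne h this, h]
  have hsupp : g.support = insert b f.support := by
    ext x
    simp only [Finset.mem_insert, Equiv.Perm.mem_support]
    constructor
    · intro hgx
      by_cases hxb : x = b
      · exact Or.inl hxb
      · right
        intro hfx
        apply hgx
        have hxa : x ≠ a := by rintro rfl; exact hfa hfx
        simp [hg, hfx, Equiv.swap_apply_of_ne_of_ne hxa hxb]
    · rintro (rfl | hx)
      · rw [gb]; exact hab
      · rw [gval x (Equiv.Perm.mem_support.mpr hx)]
        split
        · rename_i h
          intro hxb; exact hb (hxb ▸ Equiv.Perm.mem_support.mpr hx)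
        · exact hx
  have key : ∀ i : ℕ, g.SameCycle b ((f ^ i) a) := by
    intro i
    induction i with
    | zero => exact ⟨1, by simpa using gb⟩
    | succ i ih =>
      set y := (f ^ i) a with hy
      have hymem : y ∈ f.support := by
        rw [hy]; exact (Equiv.Perm.pow_apply_mem_support).mpr ha
      have hstep : (f ^ (i+1)) a = f y := by rw [hy, pow_succ', Equiv.Perm.mul_apply]
      by_cases hca : f y = a
      · rw [hstep, hca]; exact ⟨1, by simpa using gb⟩
      · have : g y = f y := by rw [gval y hymem, if_neg hca]
        rw [hstep]
        exact ih.trans ⟨1, by simpa using this⟩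
  refine ⟨⟨b, by rw [gb]; exact hab, ?_⟩, hsupp⟩
  intro y hy
  have : y ∈ g.support := Equiv.Perm.mem_support.mpr hy
  rw [hsupp, Finset.mem_insert] at this
  rcases this with rfl | hymem
  · exact Equiv.Perm.SameCycle.refl _ _
  · obtain ⟨i, hi⟩ := hf.exists_pow_eq hfa (Equiv.Perm.mem_support.mp hymem)
    exact hi ▸ key i

/-- Two disjoint `(p-1)`-cycles (`p` an odd prime) multiply to a product of two
`p`-cycles whose supports lie in the support of the product and meet in exactly
two points. -/
theorem two_p_minus_one_cycles (p n : ℕ) (hp : p.Prime) (hodd : Odd p)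
    (d₁ d₂ : Equiv.Perm (Fin n)) (hd₁ : d₁.IsCycle) (hd₂ : d₂.IsCycle)
    (hc₁ : d₁.support.card = p - 1) (hc₂ : d₂.support.card = p - 1)
    (hdisj : d₁.Disjoint d₂) :
    ∃ A B : Equiv.Perm (Fin n), A.IsCycle ∧ A.support.card = p ∧
      B.IsCycle ∧ B.support.card = p ∧ d₁ * d₂ = A * B ∧
      A.support ⊆ (d₁ * d₂).support ∧ B.support ⊆ (d₁ * d₂).support ∧
      (A.support ∩ B.support).card = 2 := by
  have hp3 : 3 ≤ p := by
    rcases hp.two_le.lt_or_eq with h | h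
    · omega
    · exact absurd h.symm (by rintro rfl; exact (Nat.not_odd_iff_even.mpr even_two) hodd)
  have hdS : _root_.Disjoint d₁.support d₂.support := hdisj.disjoint_support
  obtain ⟨a, ha⟩ : d₁.support.Nonempty := Finset.card_pos.mp (by omega)
  obtain ⟨b, hb⟩ : d₂.support.Nonempty := Finset.card_pos.mp (by omega)
  have hb1 : b ∉ d₁.support := fun h => (Finset.disjoint_left.mp hdS h) hb
  have ha2 : a ∉ d₂.support := Finset.disjoint_left.mp hdS ha
  have hab : a ≠ b := fun h => hb1 (h ▸ ha)
  set A := d₁ * Equiv.swap a b with hA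
  set B := Equiv.swap a b * d₂ with hB
  -- A
  have hAinv : A⁻¹ = Equiv.swap a b * d₁⁻¹ := by
    rw [hA, mul_inv_rev, Equiv.swap_inv]
  have ha' : a ∈ d₁⁻¹.support := by rwa [Equiv.Perm.support_inv]
  have hb' : b ∉ d₁⁻¹.support := by rwa [Equiv.Perm.support_inv]
  obtain ⟨hAc', hAs'⟩ := extend_cycle hd₁.inv ha' hb'
  rw [← hAinv] at hAc' hAs'
  have hAc : A.IsCycle := by simpa using hAc'.inv
  have hAs : A.support = insert b d₁.support := by
    rwa [Equiv.Perm.support_inv, Equiv.Perm.support_inv] at hAs'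
  -- B
  obtain ⟨hBc, hBs⟩ := extend_cycle hd₂ hb ha2
  rw [Equiv.swap_comm b a, ← hB] at hBc hBs
  -- product
  have hprod : d₁ * d₂ = A * B := by
    rw [hA, hB, mul_assoc, ← mul_assoc (Equiv.swap a b), Equiv.swap_mul_self, one_mul]
  have hsuppmul : (d₁ * d₂).support = d₁.support ∪ d₂.support := hdisj.support_mul
  have hcardA : A.support.card = p := by
    rw [hAs, Finset.card_insert_of_notMem hb1, hc₁]; omega
  have hcardB : B.support.card = p := by
    rw [hBs, Finset.card_insert_of_notMem ha2, hc₂]; omega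
  have hint : A.support ∩ B.support = {a, b} := by
    rw [hAs, hBs]
    ext x
    simp only [Finset.mem_inter, Finset.mem_insert, Finset.mem_singleton]
    constructor
    · rintro ⟨hb'' | h1, ha'' | h2⟩
      · exact Or.inr hb''
      · exact Or.inr hb''
      · exact Or.inl ha''
      · exact absurd h2 (Finset.disjoint_left.mp hdS h1)
    · rintro (rfl | rfl)
      · exact ⟨Or.inr ha, Or.inl rfl⟩
      · exact ⟨Or.inl rfl, Or.inr hb⟩
  refine ⟨A, B, hAc, hcardA, hBc, hcardB, hprod, ?_, ?_, ?_⟩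
  · rw [hAs, hsuppmul]
    intro x hx
    rcases Finset.mem_insert.mp hx with rfl | h
    · exact Finset.mem_union_right _ hb
    · exact Finset.mem_union_left _ h
  · rw [hBs, hsuppmul]
    intro x hx
    rcases Finset.mem_insert.mp hx with rfl | h
    · exact Finset.mem_union_left _ ha
    · exact Finset.mem_union_right _ h
  · rw [hint]; exact Finset.card_pair hab
end

section
/- Fix an odd prime p and let A, B be two p-cycles in S_n with m = |supp(A) ∩ supp(B)| ≥ 1. Then |supp(AB)| ≤ 2p − m and c*(AB) ≤ min(m, (2p − m)/2). -/
/-- For two `p`-cycles `A`, `B` with supports meeting in `m ≥ 1` points,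
`|supp (AB)| ≤ 2p - m` and `c*(AB) ≤ min(m, (2p - m)/2)`. -/
theorem p_cycles_intersection_bounds (p n : ℕ) (hp : p.Prime) (hodd : Odd p)
    (A B : Equiv.Perm (Fin n)) (hA : A.IsCycle) (hB : B.IsCycle)
    (hcA : A.support.card = p) (hcB : B.support.card = p) (m : ℕ)
    (hm : m = (A.support ∩ B.support).card) (hm1 : 1 ≤ m) :
    (A * B).support.card ≤ 2 * p - m ∧
      (A * B).cycleType.card ≤ m ∧
      2 * (A * B).cycleType.card ≤ 2 * p - m := by
  classical
  set S : Finset (Fin n) := A.support ∩ B.support with hS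
  have hsub : (A * B).support ⊆ A.support ∪ B.support := fun x hx =>
    Equiv.Perm.support_mul_le A B hx
  have hunion : (A.support ∪ B.support).card = 2 * p - m := by
    have h1 := Finset.card_union_add_card_inter A.support B.support
    rw [hcA, hcB, ← hm] at h1
    omega
  have hsupp : (A * B).support.card ≤ 2 * p - m := by
    rw [← hunion]; exact Finset.card_le_card hsub
  -- Key lemma: every cycle factor of A*B meets S
  have key : ∀ c ∈ (A * B).cycleFactorsFinset, (c.support ∩ S).Nonempty := by
    intro c hc
    rw [Equiv.Perm.mem_cycleFactorsFinset_iff] at hc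
    obtain ⟨hcyc, hagree⟩ := hc
    by_contra hempty
    rw [Finset.not_nonempty_iff_eq_empty, ← Finset.disjoint_iff_inter_eq_empty] at hempty
    set T := c.support with hT
    have hTS : ∀ x ∈ T, x ∉ S := fun x hx hxS =>
      Finset.disjoint_left.mp hempty hx hxS
    have hTsub : ∀ x ∈ T, x ∈ A.support ∪ B.support := by
      intro x hx
      apply hsub
      rw [Equiv.Perm.mem_support] at hx ⊢
      rw [← hagree x (by rwa [Equiv.Perm.mem_support])]
      exact hx
    obtain ⟨s, hsS⟩ : S.Nonempty := by
      rw [← Finset.card_pos, ← hm]; omega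
    -- Step 1: T ∩ A.support = ∅
    have step1 : ∀ x ∈ T, x ∉ A.support := by
      by_contra hcon
      push_neg at hcon
      obtain ⟨x, hxT, hxA⟩ := hcon
      -- A maps T ∩ A.support into itself
      have hinv : ∀ y, y ∈ T → y ∈ A.support → A y ∈ T ∧ A y ∈ A.support := by
        intro y hyT hyA
        have hyB : B y = y := by
          have : y ∉ B.support := fun h => hTS y hyT (Finset.mem_inter.mpr ⟨hyA, h⟩)
          rwa [← Equiv.Perm.notMem_support]
        have hAy : A y = c y := by
          have := hagree y hyT
          rw [Equiv.Perm.mul_apply, hyB] at this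
          exact this.symm
        constructor
        · rw [hAy]; exact Equiv.Perm.apply_mem_support.mpr hyT
        · exact Equiv.Perm.apply_mem_support.mpr hyA
      have hiter : ∀ k : ℕ, (A ^ k) x ∈ T ∧ (A ^ k) x ∈ A.support := by
        intro k
        induction k with
        | zero => exact ⟨hxT, hxA⟩
        | succ k ih =>
          rw [pow_succ', Equiv.Perm.mul_apply]
          exact hinv _ ih.1 ih.2
      have hsA : s ∈ A.support := (Finset.mem_inter.mp hsS).1
      obtain ⟨k, hk⟩ := hA.exists_pow_eq (Equiv.Perm.mem_support.mp hxA)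
        (Equiv.Perm.mem_support.mp hsA)
      exact hTS s (hk ▸ (hiter k).1) hsS
    -- Step 2: T ⊆ B.support and B maps T into itself
    have hTB : ∀ x ∈ T, x ∈ B.support := by
      intro x hx
      rcases Finset.mem_union.mp (hTsub x hx) with h | h
      · exact absurd h (step1 x hx)
      · exact h
    have hinv2 : ∀ y ∈ T, B y ∈ T := by
      intro y hyT
      have hyB := hTB y hyT
      have hByA : B y ∉ A.support := by
        intro hBy
        have h1 : A (B y) ∈ A.support := Equiv.Perm.apply_mem_support.mpr hBy
        have h2 : A (B y) = c y := by
          have := hagree y hyT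
          rw [Equiv.Perm.mul_apply] at this
          exact this.symm
        have h3 : c y ∈ T := Equiv.Perm.apply_mem_support.mpr hyT
        exact step1 _ (h2 ▸ h3) h1
      have hBy : B y = c y := by
        rw [hagree y hyT, Equiv.Perm.mul_apply]
        exact (Equiv.Perm.notMem_support.mp hByA).symm
      rw [hBy]
      exact Equiv.Perm.apply_mem_support.mpr hyT
    obtain ⟨x, hxT⟩ := hcyc.nonempty_support
    have hiter2 : ∀ k : ℕ, (B ^ k) x ∈ T := by
      intro k
      induction k with
      | zero => exact hxT
      | succ k ih =>
        rw [pow_succ', Equiv.Perm.mul_apply]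
        exact hinv2 _ ih
    have hsB : s ∈ B.support := (Finset.mem_inter.mp hsS).2
    obtain ⟨k, hk⟩ := hB.exists_pow_eq (Equiv.Perm.mem_support.mp (hTB x hxT))
      (Equiv.Perm.mem_support.mp hsB)
    exact hTS s (hk ▸ hiter2 k) hsS
  -- count cycles via injection into S
  have hcards : (A * B).cycleFactorsFinset.card ≤ S.card := by
    obtain ⟨s₀, hs₀⟩ : S.Nonempty := Finset.card_pos.mp (by omega)
    apply Finset.card_le_card_of_injOn
      (fun c => if h : (c.support ∩ S).Nonempty then h.choose else s₀)
    · intro c hc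
      have h := key c hc
      simp only [h, dif_pos]
      exact (Finset.mem_inter.mp h.choose_spec).2
    · intro c1 hc1 c2 hc2 heq
      simp only [Finset.mem_coe] at hc1 hc2
      have h1 := key c1 hc1
      have h2 := key c2 hc2
      simp only [h1, h2, dif_pos] at heq
      have hx1 : h1.choose ∈ c1.support := (Finset.mem_inter.mp h1.choose_spec).1
      have hx2 : h2.choose ∈ c2.support := (Finset.mem_inter.mp h2.choose_spec).1
      rw [heq] at hx1
      exact (Equiv.Perm.cycle_is_cycleOf hx1 hc1).trans (Equiv.Perm.cycle_is_cycleOf hx2 hc2).symm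
  have hctcard : (A * B).cycleType.card = (A * B).cycleFactorsFinset.card := by
    rw [Equiv.Perm.cycleType_def, Multiset.card_map]
    rfl
  refine ⟨hsupp, ?_, ?_⟩
  · rw [hctcard, hm]; exact hcards
  · have hsum : (A * B).cycleType.sum = (A * B).support.card :=
      Equiv.Perm.sum_cycleType _
    have h2le : (A * B).cycleType.card • 2 ≤ (A * B).cycleType.sum :=
      Multiset.card_nsmul_le_sum fun x hx => Equiv.Perm.two_le_of_mem_cycleType hx
    have : 2 * (A * B).cycleType.card ≤ (A * B).support.card := by
      rw [← hsum]; rw [smul_eq_mul, mul_comm] at h2le; exact h2le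
    omega
end
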